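/- arXiv:2504.20638 — 6 statements merged into one kernel-verified Lean document; each statement's English description precedes it below -/
import Mathlib

section
/- A finite-dimensional Poisson algebra P is nilpotent (as a dialgebra, i.e., the lower central series P^1 = P, P^{n+1} = P^n·P + [P^n,P] terminates at 0) if and only if P is both associatively nilpotent and Lie nilpotent. -/
/-!  Framework: dialgebras and Poisson algebras as bilinear structures on a module. -/

variable {F P : Type*} [Field F] [AddCommGroup P] [Module F P]

/-- A dialgebra: a vector space with two bilinear multiplications. -/
structure Dialgebra (F P : Type*) [Field F] [AddCommGroup P] [Module F P] where
  mul : P →ₗ[F] P →ₗ[F] P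
  bracket : P →ₗ[F] P →ₗ[F] P

namespace Dialgebra

variable (D : Dialgebra F P)

/-- Span of the set of products `a·b`, `a ∈ A`, `b ∈ B`. -/
def pmul (A B : Submodule F P) : Submodule F P :=
  Submodule.span F (Set.image2 (fun a b => D.mul a b) (A : Set P) (B : Set P))

/-- Span of the set of brackets `[a,b]`, `a ∈ A`, `b ∈ B`. -/
def pbra (A B : Submodule F P) : Submodule F P :=
  Submodule.span F (Set.image2 (fun a b => D.bracket a b) (A : Set P) (B : Set P))

/-- `A·B + [A,B]`. -/
def psq (A B : Submodule F P) : Submodule F P := D.pmul A B ⊔ D.pbra A B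

/-- A subalgebra: a subspace closed under both products. -/
def IsSubalgebra (A : Submodule F P) : Prop := D.psq A A ≤ A

/-- An ideal of the dialgebra. -/
def IsIdeal (A : Submodule F P) : Prop :=
  D.pmul A ⊤ ≤ A ∧ D.pmul ⊤ A ≤ A ∧ D.pbra A ⊤ ≤ A ∧ D.pbra ⊤ A ≤ A

/-- `A` is an ideal of the subalgebra `U`. -/
def IsIdealIn (A U : Submodule F P) : Prop :=
  A ≤ U ∧ D.pmul A U ≤ A ∧ D.pmul U A ≤ A ∧ D.pbra A U ≤ A ∧ D.pbra U A ≤ A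

/-- Lower central series of `B`: `B^1 = B`, `B^{n+1} = B^n·B + [B^n,B]`. -/
def lcs (B : Submodule F P) : ℕ → Submodule F P
  | 0 => B
  | n + 1 => D.psq (lcs B n) B

/-- `B` is nilpotent as a dialgebra. -/
def IsNilpotentSub (B : Submodule F P) : Prop := ∃ n, D.lcs B n = ⊥

/-- Derived series of `B`. -/
def ders (B : Submodule F P) : ℕ → Submodule F P
  | 0 => B
  | n + 1 => D.psq (ders B n) (ders B n)

/-- `B` is solvable as a dialgebra. -/
def IsSolvableSub (B : Submodule F P) : Prop := ∃ n, D.ders B n = ⊥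

/-- Associative powers: `apow B n = B_A^{n+1}`, i.e. `apow B 0 = B_A^1 = B`. -/
def apow (B : Submodule F P) : ℕ → Submodule F P
  | 0 => B
  | n + 1 => D.pmul (apow B n) B

/-- Lie powers: `lpow B n = B_L^{n+1}`. -/
def lpow (B : Submodule F P) : ℕ → Submodule F P
  | 0 => B
  | n + 1 => D.pbra (lpow B n) B

/-- Associative nilpotency of `B`. -/
def AssocNilpotent (B : Submodule F P) : Prop := ∃ n, D.apow B n = ⊥

/-- Lie nilpotency of `B`. -/
def LieNilpotent (B : Submodule F P) : Prop := ∃ n, D.lpow B n = ⊥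

/-- `mulPows B X n = X·B_A^n` (with the convention that it is `X` for `n = 0`). -/
def mulPows (B X : Submodule F P) : ℕ → Submodule F P
  | 0 => X
  | n + 1 => D.pmul (mulPows B X n) B

/-- `M` is a maximal (proper) subalgebra of the subalgebra `U`. -/
def IsMaximalSubalgebraIn (U M : Submodule F P) : Prop :=
  D.IsSubalgebra M ∧ M < U ∧ ∀ K, D.IsSubalgebra K → M ≤ K → K ≤ U → K = M ∨ K = U

/-- Frattini subalgebra of the subalgebra `U`: intersection of its maximal subalgebras. -/
def frattiniIn (U : Submodule F P) : Submodule F P :=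
  U ⊓ sInf {M | D.IsMaximalSubalgebraIn U M}

/-- Frattini ideal of the subalgebra `U`: largest ideal of `U` inside `frattiniIn U`. -/
def phiIn (U : Submodule F P) : Submodule F P :=
  sSup {I | D.IsIdealIn I U ∧ I ≤ D.frattiniIn U}

/-- Frattini subalgebra of the dialgebra. -/
def frattini : Submodule F P := D.frattiniIn ⊤

/-- Frattini ideal of the dialgebra. -/
def phi : Submodule F P := sSup {I | D.IsIdeal I ∧ I ≤ D.frattini}

/-- Minimal ideal. -/
def IsMinimalIdeal (A : Submodule F P) : Prop :=
  D.IsIdeal A ∧ A ≠ ⊥ ∧ ∀ I, D.IsIdeal I → I ≤ A → I = ⊥ ∨ I = A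

/-- Zero (trivial-multiplication) subspace. -/
def IsZeroAlg (A : Submodule F P) : Prop := D.pmul A A = ⊥ ∧ D.pbra A A = ⊥

/-- Zero socle: sum of the minimal zero ideals. -/
def zsoc : Submodule F P := sSup {A | D.IsMinimalIdeal A ∧ D.IsZeroAlg A}

/-- Socle: sum of the minimal ideals. -/
def soc : Submodule F P := sSup {A | D.IsMinimalIdeal A}

/-- Annihilator of `B` in the algebra. -/
def annih (B : Submodule F P) : Submodule F P where
  carrier := {x | ∀ b ∈ B, D.mul x b = 0 ∧ D.bracket x b = 0}
  add_mem' := by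
    intro x y hx hy b hb
    have h1 := hx b hb; have h2 := hy b hb
    constructor <;> simp [map_add, LinearMap.add_apply, h1.1, h1.2, h2.1, h2.2]
  zero_mem' := by intro b hb; simp
  smul_mem' := by
    intro c x hx b hb
    have h := hx b hb
    constructor <;> simp [map_smul, LinearMap.smul_apply, h.1, h.2]

/-- `R` is the solvable radical: the largest solvable ideal. -/
def IsRadical (R : Submodule F P) : Prop :=
  D.IsIdeal R ∧ D.IsSolvableSub R ∧ ∀ I, D.IsIdeal I → D.IsSolvableSub I → I ≤ R

/-- `N` is the nilradical: the largest nilpotent ideal. -/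
def IsNilradical (N : Submodule F P) : Prop :=
  D.IsIdeal N ∧ D.IsNilpotentSub N ∧ ∀ I, D.IsIdeal I → D.IsNilpotentSub I → I ≤ N

end Dialgebra

/-- A Poisson algebra: commutative associative product and Lie bracket linked by the Leibniz rule. -/
structure PoissonAlgebra (F P : Type*) [Field F] [AddCommGroup P] [Module F P]
    extends Dialgebra F P where
  mul_comm : ∀ x y, mul x y = mul y x
  mul_assoc : ∀ x y z, mul (mul x y) z = mul x (mul y z)
  lie_self : ∀ x, bracket x x = 0
  leibniz_lie : ∀ x y z, bracket x (bracket y z) = bracket (bracket x y) z + bracket y (bracket x z)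
  leibniz : ∀ x y z, bracket (mul x y) z = mul (bracket x z) y + mul x (bracket y z)

section Aux

variable {F P : Type*} [Field F] [AddCommGroup P] [Module F P]

namespace Dialgebra

theorem pmul_eq (D : Dialgebra F P) (A B : Submodule F P) :
    D.pmul A B = Submodule.map₂ D.mul A B :=
  (Submodule.map₂_eq_span_image2 _ _ _).symm

theorem pbra_eq (D : Dialgebra F P) (A B : Submodule F P) :
    D.pbra A B = Submodule.map₂ D.bracket A B :=
  (Submodule.map₂_eq_span_image2 _ _ _).symm

theorem pmul_le_iff {D : Dialgebra F P} {A B T : Submodule F P} :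
    D.pmul A B ≤ T ↔ ∀ a ∈ A, ∀ b ∈ B, D.mul a b ∈ T := by
  rw [pmul_eq]; exact Submodule.map₂_le

theorem pbra_le_iff {D : Dialgebra F P} {A B T : Submodule F P} :
    D.pbra A B ≤ T ↔ ∀ a ∈ A, ∀ b ∈ B, D.bracket a b ∈ T := by
  rw [pbra_eq]; exact Submodule.map₂_le

theorem mul_mem_pmul {D : Dialgebra F P} {A B : Submodule F P} {a b : P}
    (ha : a ∈ A) (hb : b ∈ B) : D.mul a b ∈ D.pmul A B := by
  rw [pmul_eq]; exact Submodule.apply_mem_map₂ _ ha hb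

theorem bracket_mem_pbra {D : Dialgebra F P} {A B : Submodule F P} {a b : P}
    (ha : a ∈ A) (hb : b ∈ B) : D.bracket a b ∈ D.pbra A B := by
  rw [pbra_eq]; exact Submodule.apply_mem_map₂ _ ha hb

theorem pmul_mono {D : Dialgebra F P} {A A' B B' : Submodule F P}
    (hA : A ≤ A') (hB : B ≤ B') : D.pmul A B ≤ D.pmul A' B' := by
  rw [pmul_eq, pmul_eq]; exact Submodule.map₂_le_map₂ hA hB

theorem pbra_mono {D : Dialgebra F P} {A A' B B' : Submodule F P}
    (hA : A ≤ A') (hB : B ≤ B') : D.pbra A B ≤ D.pbra A' B' := by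
  rw [pbra_eq, pbra_eq]; exact Submodule.map₂_le_map₂ hA hB

theorem pmul_bot_left (D : Dialgebra F P) (B : Submodule F P) : D.pmul ⊥ B = ⊥ := by
  rw [pmul_eq]; exact Submodule.map₂_bot_left _ _

theorem pmul_bot_right (D : Dialgebra F P) (A : Submodule F P) : D.pmul A ⊥ = ⊥ := by
  rw [pmul_eq]; exact Submodule.map₂_bot_right _ _

theorem pbra_bot_left (D : Dialgebra F P) (B : Submodule F P) : D.pbra ⊥ B = ⊥ := by
  rw [pbra_eq]; exact Submodule.map₂_bot_left _ _

theorem psq_def (D : Dialgebra F P) (A B : Submodule F P) :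
    D.psq A B = D.pmul A B ⊔ D.pbra A B := rfl

theorem lcs_zero (D : Dialgebra F P) (B : Submodule F P) : D.lcs B 0 = B := rfl
theorem lcs_succ (D : Dialgebra F P) (B : Submodule F P) (n : ℕ) :
    D.lcs B (n + 1) = D.psq (D.lcs B n) B := rfl

theorem apow_zero (D : Dialgebra F P) (B : Submodule F P) : D.apow B 0 = B := rfl
theorem apow_succ (D : Dialgebra F P) (B : Submodule F P) (n : ℕ) :
    D.apow B (n + 1) = D.pmul (D.apow B n) B := rfl

theorem lpow_zero (D : Dialgebra F P) (B : Submodule F P) : D.lpow B 0 = B := rfl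
theorem lpow_succ (D : Dialgebra F P) (B : Submodule F P) (n : ℕ) :
    D.lpow B (n + 1) = D.pbra (D.lpow B n) B := rfl

theorem apow_le_lcs (D : Dialgebra F P) : ∀ n, D.apow ⊤ n ≤ D.lcs ⊤ n
  | 0 => le_rfl
  | n + 1 => by
    rw [apow_succ, lcs_succ, psq_def]
    exact le_trans (pmul_mono (apow_le_lcs D n) le_rfl) le_sup_left

theorem lpow_le_lcs (D : Dialgebra F P) : ∀ n, D.lpow ⊤ n ≤ D.lcs ⊤ n
  | 0 => le_rfl
  | n + 1 => by
    rw [lpow_succ, lcs_succ, psq_def]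
    exact le_trans (pbra_mono (lpow_le_lcs D n) le_rfl) le_sup_right

theorem lpow_bot (D : Dialgebra F P) {k : ℕ} (hk : D.lpow ⊤ k = ⊥) :
    ∀ q, k ≤ q → D.lpow ⊤ q = ⊥ := by
  intro q hq
  obtain ⟨j, rfl⟩ := Nat.exists_eq_add_of_le hq
  clear hq
  induction j with
  | zero => simpa using hk
  | succ j ih =>
    rw [show k + (j + 1) = (k + j) + 1 from rfl, lpow_succ, ih, pbra_bot_left]

theorem apow_bot (D : Dialgebra F P) {m : ℕ} (hm : D.apow ⊤ m = ⊥) :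
    ∀ q, m ≤ q → D.apow ⊤ q = ⊥ := by
  intro q hq
  obtain ⟨j, rfl⟩ := Nat.exists_eq_add_of_le hq
  clear hq
  induction j with
  | zero => simpa using hm
  | succ j ih =>
    rw [show m + (j + 1) = (m + j) + 1 from rfl, apow_succ, ih, pmul_bot_left]

/-- `epow D p q`: products of `p + 1` left-normed Lie words with `q` brackets in total. -/
def epow (D : Dialgebra F P) : ℕ → ℕ → Submodule F P
  | 0, q => D.lpow ⊤ q
  | p + 1, q => ⨆ i ∈ Finset.range (q + 1), D.pmul (epow D p i) (D.lpow ⊤ (q - i))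

theorem epow_zero (D : Dialgebra F P) (q : ℕ) : epow D 0 q = D.lpow ⊤ q := rfl
theorem epow_succ (D : Dialgebra F P) (p q : ℕ) :
    epow D (p + 1) q = ⨆ i ∈ Finset.range (q + 1), D.pmul (epow D p i) (D.lpow ⊤ (q - i)) := rfl

theorem pmul_epow_lpow_le (D : Dialgebra F P) (p i j : ℕ) :
    D.pmul (epow D p i) (D.lpow ⊤ j) ≤ epow D (p + 1) (i + j) := by
  rw [epow_succ]
  refine le_iSup₂_of_le i (Finset.mem_range.2 (by omega)) (le_of_eq ?_)
  rw [Nat.add_sub_cancel_left]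

theorem epow_le_apow (D : Dialgebra F P) : ∀ p q, epow D p q ≤ D.apow ⊤ p
  | 0, q => by rw [epow_zero, apow_zero]; exact le_top
  | p + 1, q => by
    rw [epow_succ, apow_succ]
    exact iSup₂_le fun i _ => pmul_mono (epow_le_apow D p i) le_top

theorem epow_bot_lie (D : Dialgebra F P) {k : ℕ} (hk : D.lpow ⊤ k = ⊥) :
    ∀ p q, p * (k - 1) + k ≤ q → epow D p q = ⊥ := by
  intro p
  induction p with
  | zero =>
    intro q hq
    rw [epow_zero]
    exact lpow_bot D hk q (by omega)
  | succ p ih =>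
    intro q hq
    rw [epow_succ]
    refine le_bot_iff.1 (iSup₂_le fun i hi => ?_)
    have hi' : i ≤ q := by have := Finset.mem_range.1 hi; omega
    by_cases hc : k ≤ q - i
    · rw [lpow_bot D hk _ hc, pmul_bot_right]
    · have hik : p * (k - 1) + k ≤ i := by
        have h1 : (p + 1) * (k - 1) = p * (k - 1) + (k - 1) := by ring
        rw [h1] at hq
        have key : ∀ a : ℕ, a + (k - 1) + k ≤ q → ¬ k ≤ q - i → i ≤ q → a + k ≤ i := by
          intros; omega
        exact key _ hq hc hi'
      rw [ih i hik, pmul_bot_left]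

end Dialgebra

namespace PoissonAlgebra

open Dialgebra

theorem pbra_pmul (Q : PoissonAlgebra F P) (A B C : Submodule F P) :
    Q.toDialgebra.pbra (Q.toDialgebra.pmul A B) C ≤
      Q.toDialgebra.pmul (Q.toDialgebra.pbra A C) B ⊔
        Q.toDialgebra.pmul A (Q.toDialgebra.pbra B C) := by
  refine pbra_le_iff.2 fun m hm c hc => ?_
  have hsub : Q.toDialgebra.pmul A B ≤ Submodule.comap (Q.toDialgebra.bracket.flip c)
      (Q.toDialgebra.pmul (Q.toDialgebra.pbra A C) B ⊔
        Q.toDialgebra.pmul A (Q.toDialgebra.pbra B C)) := by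
    refine pmul_le_iff.2 fun a ha b hb => ?_
    simp only [Submodule.mem_comap, LinearMap.flip_apply]
    rw [Q.leibniz a b c]
    exact add_mem (Submodule.mem_sup_left (mul_mem_pmul (bracket_mem_pbra ha hc) hb))
      (Submodule.mem_sup_right (mul_mem_pmul ha (bracket_mem_pbra hb hc)))
  have := hsub hm
  simpa only [Submodule.mem_comap, LinearMap.flip_apply] using this

theorem pbra_epow_le (Q : PoissonAlgebra F P) :
    ∀ p q, Q.toDialgebra.pbra (epow Q.toDialgebra p q) ⊤ ≤
      ⨆ p' ∈ Finset.range (p + q + 2), epow Q.toDialgebra p' (p + q + 1 - p') := by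
  intro p
  induction p with
  | zero =>
    intro q
    rw [epow_zero, ← lpow_succ]
    refine le_iSup₂_of_le 0 (Finset.mem_range.2 (by omega)) (le_of_eq ?_)
    rw [epow_zero]
    norm_num
  | succ p ih =>
    intro q
    rw [epow_succ, pbra_eq, Submodule.map₂_iSup_left]
    refine iSup_le fun i => ?_
    rw [Submodule.map₂_iSup_left]
    refine iSup_le fun hi => ?_
    rw [← pbra_eq]
    have hi' : i ≤ q := by have := Finset.mem_range.1 hi; omega
    refine le_trans (Q.pbra_pmul _ _ _) (sup_le ?_ ?_)
    · refine le_trans (pmul_mono (ih i) le_rfl) ?_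
      rw [pmul_eq, Submodule.map₂_iSup_left]
      refine iSup_le fun p' => ?_
      rw [Submodule.map₂_iSup_left]
      refine iSup_le fun hp' => ?_
      rw [← pmul_eq]
      refine le_trans (pmul_epow_lpow_le _ p' _ _) ?_
      have hp'' : p' ≤ p + i + 1 := by have := Finset.mem_range.1 hp'; omega
      have harith : (p + i + 1 - p') + (q - i) = p + 1 + q + 1 - (p' + 1) := by omega
      rw [harith]
      exact le_iSup₂_of_le (p' + 1) (Finset.mem_range.2 (by omega)) le_rfl
    · rw [← lpow_succ]
      refine le_trans (pmul_epow_lpow_le _ p i _) ?_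
      have harith : i + (q - i + 1) = p + 1 + q + 1 - (p + 1) := by omega
      rw [harith]
      exact le_iSup₂_of_le (p + 1) (Finset.mem_range.2 (by omega)) le_rfl

theorem lcs_le_epow (Q : PoissonAlgebra F P) :
    ∀ n, Q.toDialgebra.lcs ⊤ n ≤
      ⨆ p ∈ Finset.range (n + 1), epow Q.toDialgebra p (n - p) := by
  intro n
  induction n with
  | zero =>
    refine le_iSup₂_of_le 0 (Finset.mem_range.2 (by omega)) ?_
    rw [lcs_zero, epow_zero, lpow_zero]
  | succ n ih =>
    rw [lcs_succ, psq_def]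
    refine sup_le ?_ ?_
    · refine le_trans (pmul_mono ih le_rfl) ?_
      rw [pmul_eq, Submodule.map₂_iSup_left]
      refine iSup_le fun p => ?_
      rw [Submodule.map₂_iSup_left]
      refine iSup_le fun hp => ?_
      rw [← pmul_eq]
      have h0 : (⊤ : Submodule F P) = Q.toDialgebra.lpow ⊤ 0 := rfl
      rw [h0]
      refine le_trans (pmul_epow_lpow_le _ p _ 0) ?_
      have hp' : p ≤ n := by have := Finset.mem_range.1 hp; omega
      have harith : (n - p) + 0 = n + 1 - (p + 1) := by omega
      rw [harith]
      exact le_iSup₂_of_le (p + 1) (Finset.mem_range.2 (by omega)) le_rfl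
    · refine le_trans (pbra_mono ih le_rfl) ?_
      rw [pbra_eq, Submodule.map₂_iSup_left]
      refine iSup_le fun p => ?_
      rw [Submodule.map₂_iSup_left]
      refine iSup_le fun hp => ?_
      rw [← pbra_eq]
      refine le_trans (Q.pbra_epow_le p (n - p)) ?_
      have hpn : p + (n - p) = n := by have := Finset.mem_range.1 hp; omega
      rw [hpn]

end PoissonAlgebra

end Aux

/-- A finite-dimensional Poisson algebra is nilpotent iff it is both associatively
and Lie nilpotent. -/
theorem poisson_nilpotent_iff {F P : Type*} [Field F] [AddCommGroup P] [Module F P]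
    [FiniteDimensional F P] (Q : PoissonAlgebra F P) :
    Q.toDialgebra.IsNilpotentSub ⊤ ↔
      Q.toDialgebra.AssocNilpotent ⊤ ∧ Q.toDialgebra.LieNilpotent ⊤ := by
  constructor
  · rintro ⟨n, hn⟩
    exact ⟨⟨n, le_bot_iff.1 (hn ▸ Dialgebra.apow_le_lcs _ n)⟩,
      ⟨n, le_bot_iff.1 (hn ▸ Dialgebra.lpow_le_lcs _ n)⟩⟩
  · rintro ⟨⟨m, hm⟩, ⟨k, hk⟩⟩
    refine ⟨m * (k - 1) + k + m, le_bot_iff.1 ((Q.lcs_le_epow _).trans ?_)⟩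
    refine iSup₂_le fun p hp => ?_
    rcases le_or_gt m p with hmp | hmp
    · exact (Dialgebra.epow_le_apow _ p _).trans_eq (Dialgebra.apow_bot _ hm p hmp)
    · refine le_of_eq (Dialgebra.epow_bot_lie _ hk p _ ?_)
      have h2 : p * (k - 1) ≤ m * (k - 1) := Nat.mul_le_mul_right _ hmp.le
      have key : ∀ a b : ℕ, a ≤ b → p < m → a + k ≤ b + k + m - p := by intros; omega
      exact key _ _ h2 hmp
end

section
/- Let P be a Poisson algebra and a ∈ P. Then the Fitting null component E_P^A(a) = {x ∈ P : (P_a)^n(x) = 0 for some n}, where P_a(y) = a·y, is a Poisson subalgebra of P, i.e., closed under both · and [·,·]. -/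
/-!  Framework: dialgebras and Poisson algebras as bilinear structures on a module. -/

variable {F P : Type*} [Field F] [AddCommGroup P] [Module F P]

section EngelAux

variable {F P : Type*} [Field F] [AddCommGroup P] [Module F P]
  (Q : PoissonAlgebra F P) (a : P)

private lemma engel_stable {m n : ℕ} (h : m ≤ n) (x : P)
    (hx : ((Q.mul a : Module.End F P) ^ m) x = 0) :
    ((Q.mul a : Module.End F P) ^ n) x = 0 := by
  obtain ⟨k, rfl⟩ := Nat.exists_eq_add_of_le h
  rw [add_comm, pow_add, Module.End.mul_apply, hx, map_zero]

private lemma engel_pow_mul (n : ℕ) (x y : P) :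
    ((Q.mul a : Module.End F P) ^ n) (Q.mul x y)
      = Q.mul (((Q.mul a : Module.End F P) ^ n) x) y := by
  induction n with
  | zero => simp
  | succ n ih =>
    rw [pow_succ', Module.End.mul_apply, Module.End.mul_apply, ih]
    exact (Q.mul_assoc a _ y).symm

private lemma engel_pow_mul' (n : ℕ) (x y : P) :
    ((Q.mul a : Module.End F P) ^ n) (Q.mul x y)
      = Q.mul x (((Q.mul a : Module.End F P) ^ n) y) := by
  rw [Q.mul_comm x y, engel_pow_mul, Q.mul_comm]

private lemma engel_step (x y : P) :
    Q.mul a (Q.bracket x y)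
      = Q.bracket (Q.mul a x) y - Q.mul (Q.bracket a y) x := by
  have h := Q.leibniz a x y
  rw [h]; abel

private lemma engel_pow_bracket (n : ℕ) (x y : P) :
    ((Q.mul a : Module.End F P) ^ (n + 1)) (Q.bracket x y)
      = Q.bracket (((Q.mul a : Module.End F P) ^ (n + 1)) x) y
        - (n + 1) • Q.mul (Q.bracket a y) (((Q.mul a : Module.End F P) ^ n) x) := by
  induction n with
  | zero =>
    simpa using engel_step Q a x y
  | succ n ih =>
    have h1 : ((Q.mul a : Module.End F P) ^ (n + 2)) (Q.bracket x y)
        = Q.mul a (((Q.mul a : Module.End F P) ^ (n + 1)) (Q.bracket x y)) := by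
      rw [pow_succ', Module.End.mul_apply]
    have hc : ∀ z w : P, Q.mul a (Q.mul z w) = Q.mul z (Q.mul a w) := fun z w => by
      rw [← Q.mul_assoc, Q.mul_comm a z, Q.mul_assoc]
    rw [h1, ih, map_sub, engel_step Q a, map_nsmul, hc]
    have h2 : ((Q.mul a : Module.End F P) ^ (n + 2)) x
        = Q.mul a (((Q.mul a : Module.End F P) ^ (n + 1)) x) := by
      rw [pow_succ', Module.End.mul_apply]
    have h3 : Q.mul a (((Q.mul a : Module.End F P) ^ n) x)
        = ((Q.mul a : Module.End F P) ^ (n + 1)) x := by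
      rw [pow_succ', Module.End.mul_apply]
    rw [h3, ← h2]
    have key : ∀ (Z A : P), A - Z - (n + 1) • Z = A - (n + 1 + 1) • Z := by
      intro Z A
      simp only [succ_nsmul]
      abel
    exact key _ _

end EngelAux

/-- The Fitting null component `E_P^A(a)` of left multiplication by `a` is a
Poisson subalgebra. -/
theorem engel_assoc_subalgebra {F P : Type*} [Field F] [AddCommGroup P] [Module F P]
    (Q : PoissonAlgebra F P) (a : P) :
    let E : Set P := {x | ∃ n : ℕ, ((Q.mul a : Module.End F P) ^ n) x = 0}
    (∀ x ∈ E, ∀ y ∈ E, x + y ∈ E) ∧ (∀ (c : F), ∀ x ∈ E, c • x ∈ E) ∧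
    (∀ x ∈ E, ∀ y ∈ E, Q.mul x y ∈ E ∧ Q.bracket x y ∈ E) := by
  intro E
  refine ⟨?_, ?_, ?_⟩
  · rintro x ⟨m, hm⟩ y ⟨k, hk⟩
    refine ⟨max m k, ?_⟩
    rw [map_add, engel_stable Q a (le_max_left m k) x hm,
      engel_stable Q a (le_max_right m k) y hk, add_zero]
  · rintro c x ⟨m, hm⟩
    exact ⟨m, by rw [map_smul, hm, smul_zero]⟩
  · rintro x ⟨m, hm⟩ y hy
    constructor
    · exact ⟨m, by rw [engel_pow_mul, hm, map_zero, LinearMap.zero_apply]⟩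
    · refine ⟨m + 1, ?_⟩
      have hm1 : ((Q.mul a : Module.End F P) ^ (m + 1)) x = 0 :=
        engel_stable Q a (Nat.le_succ m) x hm
      rw [engel_pow_bracket, hm1, hm, map_zero, LinearMap.zero_apply,
        map_zero, smul_zero, sub_zero]
end

section
/- Let P be a Poisson algebra and a ∈ P. Then E_P^L(a) = {x ∈ P : (ad a)^n(x) = 0 for some n}, where ad a = [a, -], is a Poisson subalgebra of P, i.e., closed under both the associative product and the Lie bracket. -/
/-!  Framework: dialgebras and Poisson algebras as bilinear structures on a module. -/

variable {F P : Type*} [Field F] [AddCommGroup P] [Module F P]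

section EngelHelpers

variable {F P : Type*} [Field F] [AddCommGroup P] [Module F P]

/-- If `D` is a derivation of a bilinear product `p`, then vanishing powers combine. -/
lemma deriv_pow_zero (D : Module.End F P) (p : P →ₗ[F] P →ₗ[F] P)
    (hD : ∀ u v, D (p u v) = p (D u) v + p u (D v)) :
    ∀ n : ℕ, ∀ x y : P, ∀ i j : ℕ, i + j = n → (D ^ i) x = 0 → (D ^ j) y = 0 →
      (D ^ n) (p x y) = 0 := by
  intro n
  induction n with
  | zero =>
    intro x y i j hij hx hy
    obtain ⟨hi, hj⟩ := Nat.add_eq_zero.mp hij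
    subst hi; simp only [pow_zero, Module.End.one_apply] at hx
    subst hx; simp
  | succ n ih =>
    intro x y i j hij hx hy
    rcases Nat.eq_zero_or_pos i with hi | hi
    · subst hi; simp only [pow_zero, Module.End.one_apply] at hx; subst hx; simp
    rcases Nat.eq_zero_or_pos j with hj | hj
    · subst hj; simp only [pow_zero, Module.End.one_apply] at hy; subst hy; simp
    obtain ⟨i', rfl⟩ := Nat.exists_eq_add_of_lt hi
    obtain ⟨j', rfl⟩ := Nat.exists_eq_add_of_lt hj
    simp only [zero_add] at *
    have hx' : (D ^ i') (D x) = 0 := by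
      have : (D ^ i') (D x) = (D ^ (i' + 1)) x := by
        rw [pow_succ]; rfl
      rw [this, hx]
    have hy' : (D ^ j') (D y) = 0 := by
      have : (D ^ j') (D y) = (D ^ (j' + 1)) y := by
        rw [pow_succ]; rfl
      rw [this, hy]
    have hn : (D ^ (n + 1)) (p x y) = (D ^ n) (D (p x y)) := by
      rw [pow_succ]; rfl
    rw [hn, hD, map_add]
    have h1 : (D ^ n) (p (D x) y) = 0 :=
      ih (D x) y i' (j' + 1) (by omega) hx' hy
    have h2 : (D ^ n) (p x (D y)) = 0 :=
      ih x (D y) (i' + 1) j' (by omega) hx hy'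
    rw [h1, h2, add_zero]

lemma pow_zero_of_le (D : Module.End F P) {x : P} {m n : ℕ} (h : m ≤ n)
    (hx : (D ^ m) x = 0) : (D ^ n) x = 0 := by
  obtain ⟨k, rfl⟩ := Nat.exists_eq_add_of_le h
  rw [add_comm, pow_add, Module.End.mul_apply, hx, map_zero]

end EngelHelpers

/-- The Fitting null component `E_P^L(a)` of `ad a = [a,-]` is a Poisson subalgebra. -/
theorem engel_lie_subalgebra {F P : Type*} [Field F] [AddCommGroup P] [Module F P]
    (Q : PoissonAlgebra F P) (a : P) :
    let E : Set P := {x | ∃ n : ℕ, ((Q.bracket a : Module.End F P) ^ n) x = 0}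
    (∀ x ∈ E, ∀ y ∈ E, x + y ∈ E) ∧ (∀ (c : F), ∀ x ∈ E, c • x ∈ E) ∧
    (∀ x ∈ E, ∀ y ∈ E, Q.mul x y ∈ E ∧ Q.bracket x y ∈ E) := by
  intro E
  set D : Module.End F P := Q.bracket a with hDdef
  have antisym : ∀ u v : P, Q.bracket u v = - Q.bracket v u := by
    intro u v
    have h := Q.lie_self (u + v)
    simp only [map_add, LinearMap.add_apply, Q.lie_self u, Q.lie_self v, zero_add,
      add_zero] at h
    exact eq_neg_of_add_eq_zero_left (by rw [← h]; abel)
  refine ⟨?_, ?_, ?_⟩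
  · rintro x ⟨m, hm⟩ y ⟨k, hk⟩
    exact ⟨max m k, by
      rw [map_add, pow_zero_of_le D (le_max_left m k) hm,
        pow_zero_of_le D (le_max_right m k) hk, add_zero]⟩
  · rintro c x ⟨m, hm⟩
    exact ⟨m, by rw [map_smul, hm, smul_zero]⟩
  · rintro x ⟨m, hm⟩ y ⟨k, hk⟩
    have hmul : ∀ u v : P, D (Q.mul u v) = Q.mul (D u) v + Q.mul u (D v) := by
      intro u v
      show Q.bracket a (Q.mul u v) = _
      rw [antisym a (Q.mul u v), Q.leibniz, antisym u a, antisym v a]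
      simp only [hDdef, map_neg, LinearMap.neg_apply, neg_add, neg_neg]
    have hbra : ∀ u v : P, D (Q.bracket u v) = Q.bracket (D u) v + Q.bracket u (D v) :=
      fun u v => Q.leibniz_lie a u v
    exact ⟨⟨m + k, deriv_pow_zero D Q.mul hmul (m + k) x y m k rfl hm hk⟩,
      ⟨m + k, deriv_pow_zero D Q.bracket hbra (m + k) x y m k rfl hm hk⟩⟩
end

section
/- Let A be a finite-dimensional dialgebra (vector space with two bilinear products), C a subalgebra of A, and B an ideal of A with B ⊆ F(C), where F(C) is the intersection of all maximal subalgebras of C. Then B ⊆ F(A). -/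
/-!  Framework: dialgebras and Poisson algebras as bilinear structures on a module. -/

variable {F P : Type*} [Field F] [AddCommGroup P] [Module F P]

namespace Dialgebra

variable (D : Dialgebra F P)

theorem aux_pmul_le_iff {X Y Z : Submodule F P} :
    D.pmul X Y ≤ Z ↔ ∀ x ∈ X, ∀ y ∈ Y, D.mul x y ∈ Z := by
  rw [pmul, Submodule.span_le]
  exact Set.image2_subset_iff

theorem aux_pbra_le_iff {X Y Z : Submodule F P} :
    D.pbra X Y ≤ Z ↔ ∀ x ∈ X, ∀ y ∈ Y, D.bracket x y ∈ Z := by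
  rw [pbra, Submodule.span_le]
  exact Set.image2_subset_iff

theorem aux_mem_pmul {X Y : Submodule F P} {x y : P} (hx : x ∈ X) (hy : y ∈ Y) :
    D.mul x y ∈ D.pmul X Y :=
  Submodule.subset_span (Set.mem_image2_of_mem hx hy)

theorem aux_mem_pbra {X Y : Submodule F P} {x y : P} (hx : x ∈ X) (hy : y ∈ Y) :
    D.bracket x y ∈ D.pbra X Y :=
  Submodule.subset_span (Set.mem_image2_of_mem hx hy)

/-- The join of a subalgebra and an ideal is a subalgebra. -/
theorem aux_sup_subalg {M B : Submodule F P} (hM : D.IsSubalgebra M) (hB : D.IsIdeal B) :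
    D.IsSubalgebra (M ⊔ B) := by
  obtain ⟨hBm1, hBm2, hBb1, hBb2⟩ := hB
  have hMm : D.pmul M M ≤ M := le_trans le_sup_left hM
  have hMb : D.pbra M M ≤ M := le_trans le_sup_right hM
  refine sup_le ?_ ?_
  · rw [aux_pmul_le_iff]
    intro x hx y hy
    obtain ⟨m, hm, b, hb, rfl⟩ := Submodule.mem_sup.mp hx
    obtain ⟨m', hm', b', hb', rfl⟩ := Submodule.mem_sup.mp hy
    have e : D.mul (m + b) (m' + b') =
        D.mul m m' + (D.mul m b' + (D.mul b m' + D.mul b b')) := by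
      simp [map_add, LinearMap.add_apply]; abel
    rw [e]
    refine add_mem (Submodule.mem_sup_left (hMm (D.aux_mem_pmul hm hm')))
      (Submodule.mem_sup_right ?_)
    refine add_mem (hBm2 (D.aux_mem_pmul Submodule.mem_top hb')) (add_mem ?_ ?_)
    · exact hBm1 (D.aux_mem_pmul hb Submodule.mem_top)
    · exact hBm2 (D.aux_mem_pmul Submodule.mem_top hb')
  · rw [aux_pbra_le_iff]
    intro x hx y hy
    obtain ⟨m, hm, b, hb, rfl⟩ := Submodule.mem_sup.mp hx
    obtain ⟨m', hm', b', hb', rfl⟩ := Submodule.mem_sup.mp hy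
    have e : D.bracket (m + b) (m' + b') =
        D.bracket m m' + (D.bracket m b' + (D.bracket b m' + D.bracket b b')) := by
      simp [map_add, LinearMap.add_apply]; abel
    rw [e]
    refine add_mem (Submodule.mem_sup_left (hMb (D.aux_mem_pbra hm hm')))
      (Submodule.mem_sup_right ?_)
    refine add_mem (hBb2 (D.aux_mem_pbra Submodule.mem_top hb')) (add_mem ?_ ?_)
    · exact hBb1 (D.aux_mem_pbra hb Submodule.mem_top)
    · exact hBb2 (D.aux_mem_pbra Submodule.mem_top hb')

theorem aux_inf_subalg {C M : Submodule F P} (hC : D.IsSubalgebra C) (hM : D.IsSubalgebra M) :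
    D.IsSubalgebra (C ⊓ M) := by
  refine sup_le (le_inf ?_ ?_) (le_inf ?_ ?_)
  · exact le_trans (Submodule.span_mono (Set.image2_subset
      (Set.inter_subset_left) (Set.inter_subset_left))) (le_trans le_sup_left hC)
  · exact le_trans (Submodule.span_mono (Set.image2_subset
      (Set.inter_subset_right) (Set.inter_subset_right))) (le_trans le_sup_left hM)
  · exact le_trans (Submodule.span_mono (Set.image2_subset
      (Set.inter_subset_left) (Set.inter_subset_left))) (le_trans le_sup_right hC)
  · exact le_trans (Submodule.span_mono (Set.image2_subset
      (Set.inter_subset_right) (Set.inter_subset_right))) (le_trans le_sup_right hM)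

/-- Any proper subalgebra of `C` lies in a maximal subalgebra of `C`. -/
theorem aux_exists_maximal [FiniteDimensional F P] {C : Submodule F P}
    (hC : D.IsSubalgebra C) :
    ∀ n (S : Submodule F P),
      Module.finrank F C - Module.finrank F S ≤ n → D.IsSubalgebra S → S < C →
      ∃ M, D.IsMaximalSubalgebraIn C M ∧ S ≤ M := by
  intro n
  induction n with
  | zero =>
    intro S hn _ hlt
    have := Submodule.finrank_lt_finrank_of_lt hlt
    omega
  | succ n ih =>
    intro S hn hS hlt
    by_cases hmax : ∀ K, D.IsSubalgebra K → S ≤ K → K ≤ C → K = S ∨ K = C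
    · exact ⟨S, ⟨hS, hlt, hmax⟩, le_rfl⟩
    · push_neg at hmax
      obtain ⟨K, hKs, hSK, hKC, hKne, hKneC⟩ := hmax
      have hSlt : S < K := lt_of_le_of_ne hSK (fun h => hKne h.symm)
      have hKlt : K < C := lt_of_le_of_ne hKC hKneC
      have : Module.finrank F C - Module.finrank F K ≤ n := by
        have h1 := Submodule.finrank_lt_finrank_of_lt hSlt
        omega
      obtain ⟨M, hM, hKM⟩ := ih K this hKs hKlt
      exact ⟨M, hM, le_trans hSK hKM⟩

end Dialgebra

/-- An ideal of the dialgebra `A` contained in the Frattini subalgebra of a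
subalgebra `C` is contained in the Frattini subalgebra of `A`. -/
theorem ideal_in_frattini_of_subalgebra {F P : Type*} [Field F] [AddCommGroup P] [Module F P]
    [FiniteDimensional F P] (D : Dialgebra F P) (C B : Submodule F P)
    (hC : D.IsSubalgebra C) (hB : D.IsIdeal B) (hBC : B ≤ D.frattiniIn C) :
    B ≤ D.frattini := by
  have hBleC : B ≤ C := le_trans hBC inf_le_left
  have hBInf : B ≤ sInf {M | D.IsMaximalSubalgebraIn C M} := le_trans hBC inf_le_right
  refine le_inf le_top (le_sInf ?_)
  rintro M ⟨hMs, hMlt, hMmax⟩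
  by_contra hBM
  -- M ⊔ B is a subalgebra strictly above M, hence equals ⊤
  have hsup : D.IsSubalgebra (M ⊔ B) := D.aux_sup_subalg hMs hB
  have htop : M ⊔ B = ⊤ := by
    rcases hMmax (M ⊔ B) hsup le_sup_left le_top with h | h
    · exact absurd (le_trans le_sup_right h.le) hBM
    · exact h
  -- modular law: C = (C ⊓ M) ⊔ B
  have hmod : C ⊓ M ⊔ B = C := by
    rw [inf_sup_assoc_of_le _ hBleC, htop, inf_top_eq]
  -- C ⊓ M is a proper subalgebra of C
  have hCMs : D.IsSubalgebra (C ⊓ M) := D.aux_inf_subalg hC hMs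
  have hCMlt : C ⊓ M < C := by
    rcases lt_or_eq_of_le (inf_le_left : C ⊓ M ≤ C) with h | h
    · exact h
    · exfalso
      have hCM : C ≤ M := h ▸ inf_le_right
      exact hBM (le_trans hBleC hCM)
  obtain ⟨N, hN, hCMN⟩ := D.aux_exists_maximal hC
    (Module.finrank F ↥C - Module.finrank F ↥(C ⊓ M)) (C ⊓ M) le_rfl hCMs hCMlt
  have hBN : B ≤ N := le_trans hBInf (sInf_le hN)
  have : C ≤ N := hmod ▸ sup_le hCMN hBN
  exact absurd this (not_le_of_gt hN.2.1)
end

section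
/- Let B be an ideal of a finite-dimensional dialgebra A with B·B + [B,B] = 0 (a zero ideal) and B ∩ φ(A) = 0. Then A splits over B: there is a subalgebra C of A with A = B ⊕ C as vector spaces. -/
/-!  Framework: dialgebras and Poisson algebras as bilinear structures on a module. -/

variable {F P : Type*} [Field F] [AddCommGroup P] [Module F P]

namespace Dialgebra

variable (D : Dialgebra F P)

lemma pmul_le' {X Y T : Submodule F P} :
    D.pmul X Y ≤ T ↔ ∀ x ∈ X, ∀ y ∈ Y, D.mul x y ∈ T := by
  rw [pmul, Submodule.span_le]
  constructor
  · intro h x hx y hy; exact h (Set.mem_image2_of_mem hx hy)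
  · rintro h _ ⟨x, hx, y, hy, rfl⟩; exact h x hx y hy

lemma pbra_le' {X Y T : Submodule F P} :
    D.pbra X Y ≤ T ↔ ∀ x ∈ X, ∀ y ∈ Y, D.bracket x y ∈ T := by
  rw [pbra, Submodule.span_le]
  constructor
  · intro h x hx y hy; exact h (Set.mem_image2_of_mem hx hy)
  · rintro h _ ⟨x, hx, y, hy, rfl⟩; exact h x hx y hy

lemma psq_le' {X Y T : Submodule F P} :
    D.psq X Y ≤ T ↔ (∀ x ∈ X, ∀ y ∈ Y, D.mul x y ∈ T) ∧
      (∀ x ∈ X, ∀ y ∈ Y, D.bracket x y ∈ T) := by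
  rw [psq, sup_le_iff, pmul_le', pbra_le']

/-- Intersection of two subalgebras is a subalgebra. -/
lemma inf_subalgebra {M C : Submodule F P} (hM : D.IsSubalgebra M) (hC : D.IsSubalgebra C) :
    D.IsSubalgebra (M ⊓ C) := by
  rw [IsSubalgebra, psq_le'] at *
  refine ⟨fun x hx y hy => ⟨hM.1 x hx.1 y hy.1, hC.1 x hx.2 y hy.2⟩,
    fun x hx y hy => ⟨hM.2 x hx.1 y hy.1, hC.2 x hx.2 y hy.2⟩⟩

/-- The sup of a subalgebra and an ideal is a subalgebra. -/
lemma sup_subalgebra_ideal {M I : Submodule F P} (hM : D.IsSubalgebra M) (hI : D.IsIdeal I) :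
    D.IsSubalgebra (M ⊔ I) := by
  obtain ⟨h1, h2, h3, h4⟩ := hI
  rw [pmul_le'] at h1 h2; rw [pbra_le'] at h3 h4
  rw [IsSubalgebra, psq_le'] at *
  constructor
  · intro x hx y hy
    obtain ⟨m, hm, i, hi, rfl⟩ := Submodule.mem_sup.mp hx
    obtain ⟨m', hm', i', hi', rfl⟩ := Submodule.mem_sup.mp hy
    have : D.mul (m + i) (m' + i') =
        D.mul m m' + (D.mul m i' + D.mul i m' + D.mul i i') := by
      simp only [map_add, LinearMap.add_apply]; abel
    rw [this]
    exact Submodule.add_mem_sup (hM.1 m hm m' hm')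
      (add_mem (add_mem (h2 m trivial i' hi') (h1 i hi m' trivial)) (h1 i hi i' trivial))
  · intro x hx y hy
    obtain ⟨m, hm, i, hi, rfl⟩ := Submodule.mem_sup.mp hx
    obtain ⟨m', hm', i', hi', rfl⟩ := Submodule.mem_sup.mp hy
    have : D.bracket (m + i) (m' + i') =
        D.bracket m m' + (D.bracket m i' + D.bracket i m' + D.bracket i i') := by
      simp only [map_add, LinearMap.add_apply]; abel
    rw [this]
    exact Submodule.add_mem_sup (hM.2 m hm m' hm')
      (add_mem (add_mem (h4 m trivial i' hi') (h3 i hi m' trivial)) (h3 i hi i' trivial))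

end Dialgebra

/-- A zero ideal avoiding the Frattini ideal has a complementary subalgebra. -/
theorem splits_over_zero_ideal {F P : Type*} [Field F] [AddCommGroup P] [Module F P]
    [FiniteDimensional F P] (D : Dialgebra F P) (B : Submodule F P)
    (hB : D.IsIdeal B) (hz : D.psq B B = ⊥) (hphi : B ⊓ D.phi = ⊥) :
    ∃ C, D.IsSubalgebra C ∧ B ⊓ C = ⊥ ∧ B ⊔ C = ⊤ := by
  classical
  -- elementwise consequences of the hypotheses
  have hBB : ∀ x ∈ B, ∀ y ∈ B, D.mul x y = 0 ∧ D.bracket x y = 0 := by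
    intro x hx y hy
    have h1 : D.pmul B B ≤ ⊥ := hz ▸ le_sup_left
    have h2 : D.pbra B B ≤ ⊥ := hz ▸ le_sup_right
    rw [D.pmul_le'] at h1; rw [D.pbra_le'] at h2
    exact ⟨h1 x hx y hy, h2 x hx y hy⟩
  obtain ⟨hB1, hB2, hB3, hB4⟩ := hB
  rw [D.pmul_le'] at hB1 hB2; rw [D.pbra_le'] at hB3 hB4
  -- choose a minimal subalgebra C with B ⊔ C = ⊤
  have hwf : WellFounded ((· < ·) : Submodule F P → Submodule F P → Prop) :=
    wellFounded_lt
  set S : Set (Submodule F P) := {C | D.IsSubalgebra C ∧ B ⊔ C = ⊤} with hS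
  have hStop : (⊤ : Submodule F P) ∈ S := ⟨le_top, sup_top_eq B⟩
  obtain ⟨C, hCS, hCmin⟩ := hwf.has_min S ⟨⊤, hStop⟩
  obtain ⟨hCsub, hCsup⟩ := hCS
  have hCmul : ∀ x ∈ C, ∀ y ∈ C, D.mul x y ∈ C ∧ D.bracket x y ∈ C := by
    intro x hx y hy
    have := (D.psq_le').mp hCsub
    exact ⟨this.1 x hx y hy, this.2 x hx y hy⟩
  -- B ⊓ C is an ideal of the whole algebra
  have hideal : D.IsIdeal (B ⊓ C) := by
    have key : ∀ x ∈ B ⊓ C, ∀ a : P,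
        D.mul x a ∈ B ⊓ C ∧ D.mul a x ∈ B ⊓ C ∧
        D.bracket x a ∈ B ⊓ C ∧ D.bracket a x ∈ B ⊓ C := by
      intro x hx a
      obtain ⟨b, hb, c, hc, rfl⟩ := Submodule.mem_sup.mp (hCsup ▸ Submodule.mem_top (x := a))
      have e1 : D.mul x (b + c) = D.mul x c := by
        simp [map_add, (hBB x hx.1 b hb).1]
      have e2 : D.mul (b + c) x = D.mul c x := by
        simp [map_add, LinearMap.add_apply, (hBB b hb x hx.1).1]
      have e3 : D.bracket x (b + c) = D.bracket x c := by
        simp [map_add, (hBB x hx.1 b hb).2]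
      have e4 : D.bracket (b + c) x = D.bracket c x := by
        simp [map_add, LinearMap.add_apply, (hBB b hb x hx.1).2]
      refine ⟨?_, ?_, ?_, ?_⟩
      · rw [e1]; exact ⟨hB1 x hx.1 c trivial, (hCmul x hx.2 c hc).1⟩
      · rw [e2]; exact ⟨hB2 c trivial x hx.1, (hCmul c hc x hx.2).1⟩
      · rw [e3]; exact ⟨hB3 x hx.1 c trivial, (hCmul x hx.2 c hc).2⟩
      · rw [e4]; exact ⟨hB4 c trivial x hx.1, (hCmul c hc x hx.2).2⟩
    refine ⟨?_, ?_, ?_, ?_⟩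
    · rw [D.pmul_le']; intro x hx y _; exact (key x hx y).1
    · rw [D.pmul_le']; intro x _ y hy; exact (key y hy x).2.1
    · rw [D.pbra_le']; intro x hx y _; exact (key x hx y).2.2.1
    · rw [D.pbra_le']; intro x _ y hy; exact (key y hy x).2.2.2
  -- B ⊓ C is contained in every maximal subalgebra
  have hfrat : B ⊓ C ≤ D.frattini := by
    refine le_inf le_top (le_sInf ?_)
    intro M hM
    by_contra hnotle
    -- M ⊔ (B ⊓ C) is a subalgebra strictly above M, hence = ⊤
    have hsub : D.IsSubalgebra (M ⊔ (B ⊓ C)) := D.sup_subalgebra_ideal hM.1 hideal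
    have hlt : M < M ⊔ (B ⊓ C) := left_lt_sup.mpr hnotle
    have htop : M ⊔ (B ⊓ C) = ⊤ := by
      rcases hM.2.2 _ hsub le_sup_left le_top with h | h
      · exact absurd h (ne_of_gt hlt)
      · exact h
    -- modularity: C = (B ⊓ C) ⊔ (M ⊓ C)
    have hmod : C = (B ⊓ C) ⊔ (M ⊓ C) := by
      calc C = ((B ⊓ C) ⊔ M) ⊓ C := by rw [sup_comm, htop, top_inf_eq]
        _ = (B ⊓ C) ⊔ (M ⊓ C) := sup_inf_assoc_of_le M (inf_le_right : B ⊓ C ≤ C)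
    -- then M ⊓ C is a smaller member of S, contradicting minimality
    have hsupMC : B ⊔ (M ⊓ C) = ⊤ := by
      rw [← hCsup]
      conv_rhs => rw [hmod]
      rw [← sup_assoc, sup_inf_self]
    have hMCmem : M ⊓ C ∈ S := ⟨D.inf_subalgebra hM.1 hCsub, hsupMC⟩
    have hMCeq : M ⊓ C = C := by
      by_contra hne
      exact hCmin _ hMCmem (lt_of_le_of_ne inf_le_right hne)
    have hle : B ⊓ C ≤ M ⊓ C := by rw [hMCeq]; exact inf_le_right
    exact hnotle (hle.trans inf_le_left)
  -- hence B ⊓ C ≤ φ, so B ⊓ C = ⊥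
  have hphiC : B ⊓ C ≤ D.phi := le_sSup ⟨hideal, hfrat⟩
  have : B ⊓ C ≤ B ⊓ D.phi := le_inf inf_le_left hphiC
  exact ⟨C, hCsub, le_bot_iff.mp (hphi ▸ this), hCsup⟩
end

section
/- Let P be a finite-dimensional Poisson algebra, B a subideal of P (connected to P by a chain of subalgebras each an ideal in the next), and C an ideal of B with C ⊆ φ(P). If B/C is nilpotent, then B is nilpotent. -/
/-!  Framework: dialgebras and Poisson algebras as bilinear structures on a module. -/

variable {F P : Type*} [Field F] [AddCommGroup P] [Module F P]

namespace PoissonAux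

open Submodule Module

variable {F P : Type*} [Field F] [AddCommGroup P] [Module F P]

section Basic

variable (D : Dialgebra F P)

theorem mem_pmul {A B : Submodule F P} {a b : P} (ha : a ∈ A) (hb : b ∈ B) :
    D.mul a b ∈ D.pmul A B :=
  Submodule.subset_span (Set.mem_image2_of_mem ha hb)

theorem mem_pbra {A B : Submodule F P} {a b : P} (ha : a ∈ A) (hb : b ∈ B) :
    D.bracket a b ∈ D.pbra A B :=
  Submodule.subset_span (Set.mem_image2_of_mem ha hb)

theorem pmul_le {A B W : Submodule F P} (h : ∀ a ∈ A, ∀ b ∈ B, D.mul a b ∈ W) :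
    D.pmul A B ≤ W :=
  Submodule.span_le.2 (Set.image2_subset_iff.2 h)

theorem pbra_le {A B W : Submodule F P} (h : ∀ a ∈ A, ∀ b ∈ B, D.bracket a b ∈ W) :
    D.pbra A B ≤ W :=
  Submodule.span_le.2 (Set.image2_subset_iff.2 h)

theorem pmul_mono {A A' B B' : Submodule F P} (hA : A ≤ A') (hB : B ≤ B') :
    D.pmul A B ≤ D.pmul A' B' :=
  Submodule.span_mono (Set.image2_subset hA hB)

theorem pbra_mono {A A' B B' : Submodule F P} (hA : A ≤ A') (hB : B ≤ B') :
    D.pbra A B ≤ D.pbra A' B' :=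
  Submodule.span_mono (Set.image2_subset hA hB)

theorem psq_mono {A A' B B' : Submodule F P} (hA : A ≤ A') (hB : B ≤ B') :
    D.psq A B ≤ D.psq A' B' :=
  sup_le_sup (pmul_mono D hA hB) (pbra_mono D hA hB)

theorem pmul_bot_left (B : Submodule F P) : D.pmul ⊥ B = ⊥ := by
  refine le_bot_iff.1 (pmul_le D ?_)
  intro a ha b _
  rw [Submodule.mem_bot] at ha
  simp [ha]

theorem pmul_bot_right (A : Submodule F P) : D.pmul A ⊥ = ⊥ := by
  refine le_bot_iff.1 (pmul_le D ?_)
  intro a _ b hb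
  rw [Submodule.mem_bot] at hb
  simp [hb]

theorem pbra_bot_left (B : Submodule F P) : D.pbra ⊥ B = ⊥ := by
  refine le_bot_iff.1 (pbra_le D ?_)
  intro a ha b _
  rw [Submodule.mem_bot] at ha
  simp [ha]

theorem pmul_sup_right_le (A B C : Submodule F P) :
    D.pmul A (B ⊔ C) ≤ D.pmul A B ⊔ D.pmul A C := by
  refine pmul_le D ?_
  intro a ha x hx
  obtain ⟨b, hb, c, hc, rfl⟩ := Submodule.mem_sup.1 hx
  rw [map_add]
  exact add_mem (le_sup_left (α := Submodule F P) (mem_pmul D ha hb))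
    (le_sup_right (α := Submodule F P) (mem_pmul D ha hc))

theorem pmul_iSup_left_le {ι : Sort*} (A : ι → Submodule F P) (B : Submodule F P) :
    D.pmul (⨆ i, A i) B ≤ ⨆ i, D.pmul (A i) B := by
  refine pmul_le D ?_
  intro a ha b hb
  refine Submodule.iSup_induction (motive := fun a => D.mul a b ∈ ⨆ i, D.pmul (A i) B) A ha ?_ ?_ ?_
  · intro i x hx
    exact le_iSup (fun i => D.pmul (A i) B) i (mem_pmul D hx hb)
  · simp
  · intro x y hx hy
    rw [map_add, LinearMap.add_apply]
    exact add_mem hx hy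

theorem pbra_iSup_left_le {ι : Sort*} (A : ι → Submodule F P) (B : Submodule F P) :
    D.pbra (⨆ i, A i) B ≤ ⨆ i, D.pbra (A i) B := by
  refine pbra_le D ?_
  intro a ha b hb
  refine Submodule.iSup_induction (motive := fun a => D.bracket a b ∈ ⨆ i, D.pbra (A i) B) A ha ?_ ?_ ?_
  · intro i x hx
    exact le_iSup (fun i => D.pbra (A i) B) i (mem_pbra D hx hb)
  · simp
  · intro x y hx hy
    rw [map_add, LinearMap.add_apply]
    exact add_mem hx hy

end Basic

end PoissonAux
namespace PoissonAux

open Submodule Module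

variable {F P : Type*} [Field F] [AddCommGroup P] [Module F P]

section Poisson

variable (Q : PoissonAlgebra F P)

/-- Antisymmetry of the bracket. -/
theorem bra_anti (a b : P) :
    Q.toDialgebra.bracket a b = - Q.toDialgebra.bracket b a := by
  have h := Q.lie_self (a + b)
  simp only [map_add, LinearMap.add_apply, Q.lie_self, zero_add, add_zero] at h
  rw [eq_neg_iff_add_eq_zero, add_comm]
  exact h

theorem mul_left_comm' (x w z : P) :
    Q.toDialgebra.mul x (Q.toDialgebra.mul w z) =
      Q.toDialgebra.mul w (Q.toDialgebra.mul x z) := by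
  rw [← Q.mul_assoc, Q.mul_comm x w, Q.mul_assoc]

/-- `x·[u,v] = [u, x·v] + [x,u]·v`. -/
theorem mul_bracket_exch (x u v : P) :
    Q.toDialgebra.mul x (Q.toDialgebra.bracket u v) =
      Q.toDialgebra.bracket u (Q.toDialgebra.mul x v)
        + Q.toDialgebra.mul (Q.toDialgebra.bracket x u) v := by
  have h := Q.leibniz x v u
  rw [bra_anti Q u v, map_neg, bra_anti Q u (Q.toDialgebra.mul x v), h]
  rw [bra_anti Q v u, map_neg]
  abel

/-- `[y, u·v] = [y,u]·v + u·[y,v]` : the bracket acts by derivations on the product. -/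
theorem bracket_mul_der (y u v : P) :
    Q.toDialgebra.bracket y (Q.toDialgebra.mul u v) =
      Q.toDialgebra.mul (Q.toDialgebra.bracket y u) v
        + Q.toDialgebra.mul u (Q.toDialgebra.bracket y v) := by
  have h := Q.leibniz u v y
  rw [bra_anti Q y (Q.toDialgebra.mul u v), h, bra_anti Q u y, bra_anti Q v y,
    map_neg, LinearMap.neg_apply, map_neg]
  abel

theorem pmul_comm (A B : Submodule F P) :
    Q.toDialgebra.pmul A B = Q.toDialgebra.pmul B A := by
  have key : ∀ X Y : Submodule F P, Q.toDialgebra.pmul X Y ≤ Q.toDialgebra.pmul Y X := by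
    intro X Y
    refine pmul_le _ ?_
    intro a ha b hb
    rw [Q.mul_comm]
    exact mem_pmul _ hb ha
  exact le_antisymm (key A B) (key B A)

theorem pbra_swap_le (A B : Submodule F P) :
    Q.toDialgebra.pbra A B ≤ Q.toDialgebra.pbra B A := by
  refine pbra_le _ ?_
  intro a ha b hb
  rw [bra_anti Q a b]
  exact neg_mem (mem_pbra _ hb ha)

/-- Helper submodule: elements `m` with `f m w ∈ T` for all `w ∈ W`. -/
def leftSet (f : P →ₗ[F] P →ₗ[F] P) (W T : Submodule F P) : Submodule F P where
  carrier := {m | ∀ w ∈ W, f m w ∈ T}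
  add_mem' := by
    intro x y hx hy w hw
    rw [map_add, LinearMap.add_apply]
    exact T.add_mem (hx w hw) (hy w hw)
  zero_mem' := by
    intro w hw
    rw [map_zero, LinearMap.zero_apply]
    exact T.zero_mem
  smul_mem' := by
    intro c x hx w hw
    rw [map_smul, LinearMap.smul_apply]
    exact T.smul_mem c (hx w hw)

theorem pbra_le_of_le_leftSet {X W T : Submodule F P}
    (h : X ≤ leftSet (Q.toDialgebra.bracket) W T) : Q.toDialgebra.pbra X W ≤ T := by
  refine pbra_le _ ?_
  intro a ha w hw
  exact h ha w hw

theorem pmul_le_of_le_leftSet {X W T : Submodule F P}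
    (h : X ≤ leftSet (Q.toDialgebra.mul) W T) : Q.toDialgebra.pmul X W ≤ T := by
  refine pmul_le _ ?_
  intro a ha w hw
  exact h ha w hw

/-- Leibniz at the level of spans: `[U·V, W] ≤ [U,W]·V + U·[V,W]`. -/
theorem pbra_pmul_le (U V W : Submodule F P) :
    Q.toDialgebra.pbra (Q.toDialgebra.pmul U V) W ≤
      Q.toDialgebra.pmul (Q.toDialgebra.pbra U W) V ⊔
        Q.toDialgebra.pmul U (Q.toDialgebra.pbra V W) := by
  refine pbra_le_of_le_leftSet Q ?_
  refine Submodule.span_le.2 ?_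
  rintro m ⟨u, hu, v, hv, rfl⟩
  intro w hw
  rw [Q.leibniz u v w]
  exact add_mem
    (le_sup_left (α := Submodule F P) (mem_pmul _ (mem_pbra _ hu hw) hv))
    (le_sup_right (α := Submodule F P) (mem_pmul _ hu (mem_pbra _ hv hw)))

/-- `(A·B)·C ≤ (A·C)·B`. -/
theorem pmul_swap (A B C : Submodule F P) :
    Q.toDialgebra.pmul (Q.toDialgebra.pmul A B) C ≤
      Q.toDialgebra.pmul (Q.toDialgebra.pmul A C) B := by
  refine pmul_le_of_le_leftSet Q ?_
  refine Submodule.span_le.2 ?_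
  rintro m ⟨a, ha, b, hb, rfl⟩
  intro w hw
  have : Q.toDialgebra.mul (Q.toDialgebra.mul a b) w
      = Q.toDialgebra.mul (Q.toDialgebra.mul a w) b := by
    rw [Q.mul_assoc, Q.mul_comm b w, ← Q.mul_assoc]
  rw [this]
  exact mem_pmul _ (mem_pmul _ ha hw) hb

end Poisson

end PoissonAux
namespace PoissonAux

open Submodule Module

variable {F P : Type*} [Field F] [AddCommGroup P] [Module F P]

section Frattini

variable (D : Dialgebra F P)

theorem exists_maximal_aux [FiniteDimensional F P] :
    ∀ (k : ℕ) (U : Submodule F P), D.IsSubalgebra U → U ≠ ⊤ →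
      finrank F P ≤ finrank F U + k →
      ∃ M, D.IsMaximalSubalgebraIn ⊤ M ∧ U ≤ M := by
  intro k
  induction k with
  | zero =>
    intro U hU hne hle
    exfalso
    refine hne (Submodule.eq_top_of_finrank_eq (le_antisymm (Submodule.finrank_le U) ?_))
    simpa using hle
  | succ k ih =>
    intro U hU hne hle
    by_cases hmax : ∀ K, D.IsSubalgebra K → U ≤ K → K ≤ ⊤ → K = U ∨ K = ⊤
    · exact ⟨U, ⟨hU, lt_of_le_of_ne le_top hne, hmax⟩, le_rfl⟩
    · push_neg at hmax
      obtain ⟨K, hK, hUK, hKtop, hKU, hKT⟩ := hmax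
      have hlt : U < K := lt_of_le_of_ne hUK (fun h => hKU h.symm)
      have hrk : finrank F U < finrank F K := Submodule.finrank_lt_finrank_of_lt hlt
      obtain ⟨M, hM, hKM⟩ := ih K hK hKT (by omega)
      exact ⟨M, hM, hUK.trans hKM⟩

theorem exists_maximal [FiniteDimensional F P] {U : Submodule F P}
    (hU : D.IsSubalgebra U) (hne : U ≠ ⊤) :
    ∃ M, D.IsMaximalSubalgebraIn ⊤ M ∧ U ≤ M := by
  refine exists_maximal_aux D (finrank F P - finrank F U) U hU hne ?_
  have := Submodule.finrank_le U
  omega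

theorem phi_le_frattini : D.phi ≤ D.frattini :=
  sSup_le fun _ hI => hI.2

theorem frattini_le_maximal {M : Submodule F P} (hM : D.IsMaximalSubalgebraIn ⊤ M) :
    D.frattini ≤ M :=
  le_trans inf_le_right (sInf_le hM)

/-- The non-generator property of the Frattini ideal. -/
theorem nongen [FiniteDimensional F P] {K : Submodule F P} (hK : D.IsSubalgebra K)
    (h : K ⊔ D.phi = ⊤) : K = ⊤ := by
  by_contra hne
  obtain ⟨M, hM, hKM⟩ := exists_maximal D hK hne
  have hphiM : D.phi ≤ M := (phi_le_frattini D).trans (frattini_le_maximal D hM)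
  have htop : (⊤ : Submodule F P) ≤ M := h ▸ sup_le hKM hphiM
  exact (ne_of_lt hM.2.1) (top_le_iff.1 htop)

end Frattini

section PhiIdeal

variable (Q : PoissonAlgebra F P)

theorem phi_isIdeal : Q.toDialgebra.IsIdeal Q.toDialgebra.phi := by
  set S := {I : Submodule F P | Q.toDialgebra.IsIdeal I ∧ I ≤ Q.toDialgebra.frattini} with hS
  have hphi : Q.toDialgebra.phi = ⨆ I : S, (I : Submodule F P) := by
    rw [Dialgebra.phi, sSup_eq_iSup']
  have key : ∀ p : P, ∀ a ∈ Q.toDialgebra.phi,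
      Q.toDialgebra.mul a p ∈ Q.toDialgebra.phi ∧
      Q.toDialgebra.bracket a p ∈ Q.toDialgebra.phi := by
    intro p a ha
    rw [hphi] at ha
    refine Submodule.iSup_induction (motive := fun a => Q.toDialgebra.mul a p ∈ Q.toDialgebra.phi ∧
      Q.toDialgebra.bracket a p ∈ Q.toDialgebra.phi) _ ha ?_ ?_ ?_
    · rintro ⟨I, hI⟩ x hx
      constructor
      · exact le_sSup hI (hI.1.1 (mem_pmul _ hx (mem_top (x := p))))
      · exact le_sSup hI (hI.1.2.2.1 (mem_pbra _ hx (mem_top (x := p))))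
    · constructor <;> simp
    · intro x y hx hy
      constructor
      · rw [map_add, LinearMap.add_apply]; exact add_mem hx.1 hy.1
      · rw [map_add, LinearMap.add_apply]; exact add_mem hx.2 hy.2
  have h1 : Q.toDialgebra.pmul Q.toDialgebra.phi ⊤ ≤ Q.toDialgebra.phi :=
    pmul_le _ (fun a ha p _ => (key p a ha).1)
  have h3 : Q.toDialgebra.pbra Q.toDialgebra.phi ⊤ ≤ Q.toDialgebra.phi :=
    pbra_le _ (fun a ha p _ => (key p a ha).2)
  refine ⟨h1, ?_, h3, ?_⟩
  · rw [pmul_comm Q]; exact h1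
  · exact (pbra_swap_le Q _ _).trans h3

theorem phi_mul_invariant (b : P) {x : P} (hx : x ∈ Q.toDialgebra.phi) :
    Q.toDialgebra.mul b x ∈ Q.toDialgebra.phi := by
  have := (phi_isIdeal Q).2.1 (mem_pmul Q.toDialgebra (mem_top (x := b)) hx)
  exact this

theorem phi_bra_invariant (b : P) {x : P} (hx : x ∈ Q.toDialgebra.phi) :
    Q.toDialgebra.bracket b x ∈ Q.toDialgebra.phi :=
  (phi_isIdeal Q).2.2.2 (mem_pbra Q.toDialgebra (mem_top (x := b)) hx)

end PhiIdeal

end PoissonAux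
namespace PoissonAux

open Submodule Module

variable {F P : Type*} [Field F] [AddCommGroup P] [Module F P]

section Ops

variable (Q : PoissonAlgebra F P)

/-- Left multiplication operator. -/
def Lop (x : P) : Module.End F P := Q.toDialgebra.mul x

/-- Adjoint (bracket) operator. -/
def Aop (x : P) : Module.End F P := Q.toDialgebra.bracket x

@[simp] theorem Lop_apply (x p : P) : Lop Q x p = Q.toDialgebra.mul x p := rfl
@[simp] theorem Aop_apply (x p : P) : Aop Q x p = Q.toDialgebra.bracket x p := rfl

theorem Lpow_mul (x : P) : ∀ (k : ℕ) (u v : P),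
    ((Lop Q x)^k) (Q.toDialgebra.mul u v) = Q.toDialgebra.mul (((Lop Q x)^k) u) v := by
  intro k
  induction k with
  | zero => intro u v; simp
  | succ k ih =>
    intro u v
    rw [pow_succ', Module.End.mul_apply, Module.End.mul_apply, ih]
    show Q.toDialgebra.mul x (Q.toDialgebra.mul (((Lop Q x)^k) u) v) = _
    rw [← Q.mul_assoc]
    rfl

theorem Lpow_hpow (x : P) (j : ℕ) (w : P) :
    ((Lop Q x)^(j+1)) w = Q.toDialgebra.mul x (((Lop Q x)^j) w) := by
  rw [pow_succ', Module.End.mul_apply]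
  rfl

theorem Lpow_bracket (x : P) : ∀ (k : ℕ) (u v : P),
    ((Lop Q x)^(k+1)) (Q.toDialgebra.bracket u v) =
      Q.toDialgebra.bracket u (((Lop Q x)^(k+1)) v)
        + (k+1) • Q.toDialgebra.mul (Q.toDialgebra.bracket x u) (((Lop Q x)^k) v) := by
  intro k
  induction k with
  | zero =>
    intro u v
    simp only [zero_add, pow_one, pow_zero, Module.End.one_apply, one_smul]
    exact mul_bracket_exch Q x u v
  | succ k ih =>
    intro u v
    calc ((Lop Q x)^(k+1+1)) (Q.toDialgebra.bracket u v)
        = Q.toDialgebra.mul x (((Lop Q x)^(k+1)) (Q.toDialgebra.bracket u v)) :=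
          Lpow_hpow Q x (k+1) _
      _ = Q.toDialgebra.mul x (Q.toDialgebra.bracket u (((Lop Q x)^(k+1)) v)
            + (k+1) • Q.toDialgebra.mul (Q.toDialgebra.bracket x u) (((Lop Q x)^k) v)) := by
          rw [ih]
      _ = Q.toDialgebra.mul x (Q.toDialgebra.bracket u (((Lop Q x)^(k+1)) v))
            + (k+1) • Q.toDialgebra.mul x
              (Q.toDialgebra.mul (Q.toDialgebra.bracket x u) (((Lop Q x)^k) v)) := by
          rw [map_add, map_nsmul]
      _ = (Q.toDialgebra.bracket u (Q.toDialgebra.mul x (((Lop Q x)^(k+1)) v))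
            + Q.toDialgebra.mul (Q.toDialgebra.bracket x u) (((Lop Q x)^(k+1)) v))
            + (k+1) • Q.toDialgebra.mul (Q.toDialgebra.bracket x u)
              (Q.toDialgebra.mul x (((Lop Q x)^k) v)) := by
          rw [mul_bracket_exch Q x u, mul_left_comm' Q]
      _ = (Q.toDialgebra.bracket u (((Lop Q x)^(k+1+1)) v)
            + Q.toDialgebra.mul (Q.toDialgebra.bracket x u) (((Lop Q x)^(k+1)) v))
            + (k+1) • Q.toDialgebra.mul (Q.toDialgebra.bracket x u) (((Lop Q x)^(k+1)) v) := by
          rw [← Lpow_hpow Q x k v, ← Lpow_hpow Q x (k+1) v]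
      _ = Q.toDialgebra.bracket u (((Lop Q x)^(k+1+1)) v)
            + (k+1+1) • Q.toDialgebra.mul (Q.toDialgebra.bracket x u) (((Lop Q x)^(k+1)) v) := by
          rw [add_assoc]
          congr 1
          rw [add_comm, ← succ_nsmul]

/-- `ad` is a derivation of the product. -/
theorem Aop_mul_der (y u v : P) :
    (Aop Q y) (Q.toDialgebra.mul u v) =
      Q.toDialgebra.mul ((Aop Q y) u) v + Q.toDialgebra.mul u ((Aop Q y) v) := by
  simpa using bracket_mul_der Q y u v

/-- `ad` is a derivation of the bracket. -/
theorem Aop_bra_der (y u v : P) :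
    (Aop Q y) (Q.toDialgebra.bracket u v) =
      Q.toDialgebra.bracket ((Aop Q y) u) v + Q.toDialgebra.bracket u ((Aop Q y) v) := by
  have h := Q.leibniz_lie y u v
  simpa [bra_anti Q ((Aop Q y) u) v] using h

/-- Kernel-power vanishing for derivations. -/
theorem der_pow_ker (T : Module.End F P) (op : P →ₗ[F] P →ₗ[F] P)
    (hop : ∀ u v, T (op u v) = op (T u) v + op u (T v)) :
    ∀ (n a b : ℕ) (u v : P), a + b = n → (T^a) u = 0 → (T^b) v = 0 →
      (T^n) (op u v) = 0 := by
  intro n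
  induction n with
  | zero =>
    intro a b u v hab hu hv
    have ha : a = 0 := by omega
    subst ha
    rw [pow_zero, Module.End.one_apply] at hu
    subst hu
    simp
  | succ n ih =>
    intro a b u v hab hu hv
    match a, b with
    | 0, b =>
      rw [pow_zero, Module.End.one_apply] at hu
      subst hu
      simp
    | a+1, 0 =>
      rw [pow_zero, Module.End.one_apply] at hv
      subst hv
      simp
    | a+1, b+1 =>
      rw [pow_succ, Module.End.mul_apply, hop, map_add]
      have h1 : (T^n) (op (T u) v) = 0 := by
        refine ih a (b+1) (T u) v (by omega) ?_ hv
        rw [← Module.End.mul_apply, ← pow_succ]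
        exact hu
      have h2 : (T^n) (op u (T v)) = 0 := by
        refine ih (a+1) b u (T v) (by omega) hu ?_
        rw [← Module.End.mul_apply, ← pow_succ]
        exact hv
      rw [h1, h2, add_zero]

theorem ker_pow_succ_le (T : Module.End F P) (a : ℕ) :
    LinearMap.ker (T^a) ≤ LinearMap.ker (T^(a+1)) := by
  intro x hx
  rw [LinearMap.mem_ker] at hx ⊢
  rw [pow_succ', Module.End.mul_apply, hx, map_zero]

theorem ker_pow_le_of_le (T : Module.End F P) {a b : ℕ} (h : a ≤ b) :
    LinearMap.ker (T^a) ≤ LinearMap.ker (T^b) := by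
  induction b with
  | zero =>
    have h0 : a = 0 := by omega
    subst h0
    exact le_rfl
  | succ b ih =>
    rcases Nat.lt_or_ge a (b+1) with h' | h'
    · exact (ih (by omega)).trans (ker_pow_succ_le T b)
    · have : a = b + 1 := by omega
      subst this; exact le_rfl

theorem ker_pow_stab_step (T : Module.End F P) {j : ℕ}
    (h : LinearMap.ker (T^(j+1)) = LinearMap.ker (T^j)) :
    ∀ k, LinearMap.ker (T^(j+k)) = LinearMap.ker (T^j) := by
  intro k
  induction k with
  | zero => rfl
  | succ k ih =>
    refine le_antisymm ?_ (ker_pow_le_of_le T (by omega))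
    intro x hx
    rw [LinearMap.mem_ker] at hx
    rw [show j + (k+1) = (j + k) + 1 by omega, pow_succ, Module.End.mul_apply] at hx
    have : T x ∈ LinearMap.ker (T^(j+k)) := LinearMap.mem_ker.2 hx
    rw [ih] at this
    rw [LinearMap.mem_ker] at this ⊢
    have hx' : x ∈ LinearMap.ker (T^(j+1)) := by
      rw [LinearMap.mem_ker, pow_succ, Module.End.mul_apply]
      exact this
    rw [h] at hx'
    exact hx'

theorem exists_ker_stab (T : Module.End F P) [FiniteDimensional F P] :
    ∃ j ≤ finrank F P, LinearMap.ker (T^(j+1)) = LinearMap.ker (T^j) := by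
  by_contra hc
  push_neg at hc
  have key : ∀ j ≤ finrank F P + 1, j ≤ finrank F (LinearMap.ker (T^j)) := by
    intro j
    induction j with
    | zero => intro _; omega
    | succ j ih =>
      intro hj
      have h1 : j ≤ finrank F (LinearMap.ker (T^j)) := ih (by omega)
      have hne := hc j (by omega)
      have hlt : LinearMap.ker (T^j) < LinearMap.ker (T^(j+1)) :=
        lt_of_le_of_ne (ker_pow_succ_le T j) (fun h => hne h.symm)
      have := Submodule.finrank_lt_finrank_of_lt hlt
      omega
  have h2 := key (finrank F P + 1) le_rfl
  have h3 := Submodule.finrank_le (LinearMap.ker (T^(finrank F P + 1)))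
  omega

theorem ker_pow_stab (T : Module.End F P) [FiniteDimensional F P] :
    ∀ k, LinearMap.ker (T^(finrank F P + k)) = LinearMap.ker (T^(finrank F P)) := by
  obtain ⟨j, hj, hstab⟩ := exists_ker_stab T
  have hfull := ker_pow_stab_step T hstab
  intro k
  rw [show finrank F P + k = j + (finrank F P + k - j) by omega, hfull,
    ← hfull (finrank F P - j), show j + (finrank F P - j) = finrank F P by omega]

theorem fitting_sup (T : Module.End F P) [FiniteDimensional F P] (s : ℕ)
    (h2 : LinearMap.ker (T^(s+s)) = LinearMap.ker (T^s)) :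
    LinearMap.ker (T^s) ⊔ LinearMap.range (T^s) = ⊤ := by
  have hdisj : LinearMap.ker (T^s) ⊓ LinearMap.range (T^s) = ⊥ := by
    refine le_bot_iff.1 ?_
    intro x hx
    rw [Submodule.mem_inf] at hx
    obtain ⟨hk, hr⟩ := hx
    obtain ⟨y, rfl⟩ := hr
    rw [LinearMap.mem_ker] at hk
    have : y ∈ LinearMap.ker (T^(s+s)) := by
      rw [LinearMap.mem_ker, pow_add, Module.End.mul_apply]
      exact hk
    rw [h2, LinearMap.mem_ker] at this
    rw [Submodule.mem_bot, this]
  refine Submodule.eq_top_of_finrank_eq ?_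
  have hrn := LinearMap.finrank_range_add_finrank_ker (T^s)
  have hsum := Submodule.finrank_sup_add_finrank_inf_eq
    (LinearMap.ker (T^s)) (LinearMap.range (T^s))
  rw [hdisj] at hsum
  simp only [finrank_bot, add_zero] at hsum
  omega

theorem map_pow_succ (T : Module.End F P) (j : ℕ) (X : Submodule F P) :
    Submodule.map (T^(j+1)) X = Submodule.map T (Submodule.map (T^j) X) := by
  rw [pow_succ', Module.End.mul_eq_comp, Submodule.map_comp]

theorem map_le_of (f : Module.End F P) {X W : Submodule F P}
    (h : ∀ x ∈ X, f x ∈ W) : Submodule.map f X ≤ W := by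
  rintro y ⟨x, hx, rfl⟩
  exact h x hx

/-- Main operator nilpotency lemma, via Fitting + non-generator. -/
theorem endo_nilp [FiniteDimensional F P] (T : Module.End F P) (N₀ : ℕ)
    (hrange : Submodule.map (T ^ N₀) ⊤ ≤ Q.toDialgebra.phi)
    (hphiT : ∀ x ∈ Q.toDialgebra.phi, T x ∈ Q.toDialgebra.phi)
    (hksub : ∀ s : ℕ, (∀ k, LinearMap.ker (T ^ (s+k)) = LinearMap.ker (T ^ s)) →
        Q.toDialgebra.IsSubalgebra (LinearMap.ker (T ^ s))) :
    ∃ s, T ^ s = 0 := by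
  set d := finrank F P with hd
  set s := d + N₀ with hs
  have hstab : ∀ k, LinearMap.ker (T^(s+k)) = LinearMap.ker (T^s) := by
    intro k
    rw [hs, show d + N₀ + k = d + (N₀ + k) by omega, ker_pow_stab T (N₀ + k),
      ← ker_pow_stab T N₀]
  have hK : Q.toDialgebra.IsSubalgebra (LinearMap.ker (T^s)) := hksub s hstab
  have hfit : LinearMap.ker (T^s) ⊔ LinearMap.range (T^s) = ⊤ :=
    fitting_sup T s (hstab s)
  have hmapphi : ∀ k, Submodule.map (T^(N₀+k)) ⊤ ≤ Q.toDialgebra.phi := by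
    intro k
    induction k with
    | zero => exact hrange
    | succ k ih =>
      rw [show N₀ + (k+1) = (N₀ + k) + 1 by omega, map_pow_succ]
      refine le_trans (Submodule.map_mono ih) (map_le_of T ?_)
      intro x hx
      exact hphiT x hx
  have hr : LinearMap.range (T^s) ≤ Q.toDialgebra.phi := by
    rw [LinearMap.range_eq_map]
    rw [hs, add_comm d N₀]
    exact hmapphi d
  have hsup : LinearMap.ker (T^s) ⊔ Q.toDialgebra.phi = ⊤ := by
    refine top_unique ?_
    rw [← hfit]
    exact sup_le_sup_left hr _
  have hKtop := nongen Q.toDialgebra hK hsup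
  refine ⟨s, ?_⟩
  ext x
  have hx : x ∈ LinearMap.ker (T^s) := hKtop ▸ Submodule.mem_top
  rw [LinearMap.mem_ker] at hx
  simp [hx]

end Ops

end PoissonAux
namespace PoissonAux

open Submodule Module

variable {F P : Type*} [Field F] [AddCommGroup P] [Module F P]

section Engel

variable (Q : PoissonAlgebra F P)

/-- Lie nilpotency of the bracket powers via Engel's theorem. -/
theorem lpow_eq_bot [FiniteDimensional F P] (B : Submodule F P)
    (hB : Q.toDialgebra.IsSubalgebra B)
    (hnil : ∀ b ∈ B, ∃ s : ℕ, (Aop Q b) ^ s = 0) :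
    ∃ m, Q.toDialgebra.lpow B m = ⊥ := by
  classical
  have hmem : ∀ x y : ↥B, Q.toDialgebra.bracket (x : P) (y : P) ∈ B := by
    intro x y
    exact hB (le_sup_right (α := Submodule F P)
      (mem_pbra Q.toDialgebra x.2 y.2) : _ ∈ Q.toDialgebra.psq B B)
  letI : LieRing ↥B :=
    { (inferInstance : AddCommGroup ↥B) with
      bracket := fun x y => ⟨Q.toDialgebra.bracket (x : P) (y : P), hmem x y⟩
      add_lie := by
        intro x y z
        apply Subtype.ext
        simp [map_add, LinearMap.add_apply]
      lie_add := by
        intro x y z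
        apply Subtype.ext
        simp [map_add]
      lie_self := by
        intro x
        apply Subtype.ext
        simp [Q.lie_self]
      leibniz_lie := by
        intro x y z
        apply Subtype.ext
        simp only [Submodule.coe_add]
        exact Q.leibniz_lie (x : P) (y : P) (z : P) }
  letI : LieAlgebra F ↥B :=
    { (inferInstance : Module F ↥B) with
      lie_smul := by
        intro t x y
        apply Subtype.ext
        show Q.toDialgebra.bracket (x : P) (t • (y : P)) =
          t • Q.toDialgebra.bracket (x : P) (y : P)
        exact map_smul _ t _ }
  letI : LieRingModule ↥B P :=
    { bracket := fun x m => Q.toDialgebra.bracket (x : P) m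
      add_lie := by
        intro x y m
        simp [map_add, LinearMap.add_apply]
      lie_add := by
        intro x m n
        simp [map_add]
      leibniz_lie := by
        intro x y m
        exact Q.leibniz_lie (x : P) (y : P) m }
  letI : LieModule F ↥B P :=
    { smul_lie := by
        intro t x m
        show Q.toDialgebra.bracket ((t • x : ↥B) : P) m = t • Q.toDialgebra.bracket (x : P) m
        rw [Submodule.coe_smul, map_smul, LinearMap.smul_apply]
      lie_smul := by
        intro t x m
        show Q.toDialgebra.bracket (x : P) (t • m) = t • Q.toDialgebra.bracket (x : P) m
        rw [map_smul] }
  have h1 : ∀ x : ↥B, IsNilpotent (LieModule.toEnd F ↥B P x) := by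
    intro x
    obtain ⟨s, hs⟩ := hnil (x : P) x.2
    have he : LieModule.toEnd F ↥B P x = Aop Q (x : P) := by
      ext p
      rw [LieModule.toEnd_apply_apply]
      rfl
    exact ⟨s, by rw [he]; exact hs⟩
  have h2 : LieModule.IsNilpotent ↥B P :=
    LieAlgebra.isEngelian_of_isNoetherian P h1
  obtain ⟨k, hk⟩ := (LieModule.isNilpotent_iff (R := F) (L := ↥B) (M := P)).1 h2
  have h3 : ∀ m, Q.toDialgebra.lpow B m ≤
      (LieModule.lowerCentralSeries F ↥B P m : Submodule F P) := by
    intro m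
    induction m with
    | zero =>
      show Q.toDialgebra.lpow B 0 ≤ _
      rw [show LieModule.lowerCentralSeries F ↥B P 0 = ⊤ from rfl]
      exact le_top.trans (by rw [LieSubmodule.top_toSubmodule])
    | succ m ih =>
      show Q.toDialgebra.pbra (Q.toDialgebra.lpow B m) B ≤ _
      refine pbra_le _ ?_
      intro u hu b hb
      rw [LieModule.lowerCentralSeries_succ]
      rw [bra_anti Q u b]
      refine neg_mem ?_
      have hmemu : u ∈ LieModule.lowerCentralSeries F ↥B P m :=
        (LieSubmodule.mem_toSubmodule _).1 (ih hu)
      have : ⁅(⟨b, hb⟩ : ↥B), u⁆ ∈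
          ⁅(⊤ : LieIdeal F ↥B), LieModule.lowerCentralSeries F ↥B P m⁆ :=
        LieSubmodule.lie_mem_lie (LieSubmodule.mem_top _) hmemu
      exact (LieSubmodule.mem_toSubmodule _).2 this
  refine ⟨k, le_bot_iff.1 ?_⟩
  refine (h3 k).trans ?_
  rw [hk, LieSubmodule.bot_toSubmodule]

end Engel

end PoissonAux
namespace PoissonAux

open Submodule Module

variable {F P : Type*} [Field F] [AddCommGroup P] [Module F P]

section Assoc

variable (Q : PoissonAlgebra F P)

/-- Iterated multiplication by `V` starting from `X`. -/
def Mu (D : Dialgebra F P) (V X : Submodule F P) : ℕ → Submodule F P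
  | 0 => X
  | k + 1 => D.pmul (Mu D V X k) V

theorem Mu_mono_X (D : Dialgebra F P) (V : Submodule F P) {X Y : Submodule F P}
    (h : X ≤ Y) : ∀ k, Mu D V X k ≤ Mu D V Y k := by
  intro k
  induction k with
  | zero => exact h
  | succ k ih => exact pmul_mono D ih le_rfl

theorem Mu_bot (D : Dialgebra F P) (V : Submodule F P) : ∀ k, Mu D V ⊥ k = ⊥ := by
  intro k
  induction k with
  | zero => rfl
  | succ k ih => show D.pmul (Mu D V ⊥ k) V = ⊥; rw [ih, pmul_bot_left]

theorem Mu_add (D : Dialgebra F P) (V X : Submodule F P) (a : ℕ) :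
    ∀ b, Mu D V X (a + b) = Mu D V (Mu D V X a) b := by
  intro b
  induction b with
  | zero => rfl
  | succ b ih => show D.pmul (Mu D V X (a+b)) V = _; rw [ih]; rfl

theorem Mu_push (V W Z : Submodule F P) :
    ∀ i, Q.toDialgebra.pmul (Mu Q.toDialgebra V W i) Z ≤
      Mu Q.toDialgebra V (Q.toDialgebra.pmul W Z) i := by
  intro i
  induction i with
  | zero => exact le_rfl
  | succ i ih =>
    show Q.toDialgebra.pmul (Q.toDialgebra.pmul (Mu Q.toDialgebra V W i) V) Z ≤
      Q.toDialgebra.pmul (Mu Q.toDialgebra V (Q.toDialgebra.pmul W Z) i) V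
    exact (pmul_swap Q _ _ _).trans (pmul_mono _ ih le_rfl)

theorem Mu_sup_le (Y Z X : Submodule F P) :
    ∀ q, Mu Q.toDialgebra (Y ⊔ Z) X q ≤
      ⨆ (i : ℕ) (_ : i ≤ q), Mu Q.toDialgebra Y (Mu Q.toDialgebra Z X (q - i)) i := by
  intro q
  induction q with
  | zero =>
    exact le_iSup_of_le 0 (le_iSup_of_le (le_refl 0) le_rfl)
  | succ q ih =>
    show Q.toDialgebra.pmul (Mu Q.toDialgebra (Y ⊔ Z) X q) (Y ⊔ Z) ≤ _
    refine le_trans (pmul_mono _ ih le_rfl) ?_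
    refine le_trans (pmul_sup_right_le _ _ _ _) (sup_le ?_ ?_)
    · -- multiply by Y : appended to the Y-part
      refine le_trans (pmul_iSup_left_le _ _ _) (iSup_le ?_)
      intro i
      refine le_trans (pmul_iSup_left_le _ _ _) (iSup_le ?_)
      intro hi
      refine le_iSup_of_le (i+1) (le_iSup_of_le (by omega) ?_)
      show Q.toDialgebra.pmul (Mu Q.toDialgebra Y (Mu Q.toDialgebra Z X (q - i)) i) Y ≤
        Mu Q.toDialgebra Y (Mu Q.toDialgebra Z X (q + 1 - (i+1))) (i+1)
      have : q + 1 - (i+1) = q - i := by omega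
      rw [this]
      exact le_rfl
    · -- multiply by Z : pushed inside
      refine le_trans (pmul_iSup_left_le _ _ _) (iSup_le ?_)
      intro i
      refine le_trans (pmul_iSup_left_le _ _ _) (iSup_le ?_)
      intro hi
      refine le_trans (Mu_push Q _ _ _ i) ?_
      refine le_iSup_of_le i (le_iSup_of_le (by omega) ?_)
      have h1 : Q.toDialgebra.pmul (Mu Q.toDialgebra Z X (q - i)) Z =
          Mu Q.toDialgebra Z X ((q - i) + 1) := rfl
      have h2 : q + 1 - i = (q - i) + 1 := by omega
      rw [h1, h2]

theorem pmul_span_singleton_le (X : Submodule F P) (v : P) :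
    Q.toDialgebra.pmul X (span F {v}) ≤ Submodule.map (Lop Q v) X := by
  refine pmul_le _ ?_
  intro a ha y hy
  obtain ⟨t, rfl⟩ := Submodule.mem_span_singleton.1 hy
  rw [map_smul]
  refine Submodule.smul_mem _ t ?_
  rw [Q.mul_comm a v]
  exact ⟨a, ha, rfl⟩

theorem Mu_singleton_le (W : Submodule F P) (v : P) :
    ∀ i, Mu Q.toDialgebra (span F {v}) W i ≤ Submodule.map ((Lop Q v)^i) W := by
  intro i
  induction i with
  | zero =>
    show W ≤ Submodule.map ((Lop Q v)^0) W
    rw [pow_zero]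
    intro x hx
    exact ⟨x, hx, rfl⟩
  | succ i ih =>
    show Q.toDialgebra.pmul (Mu Q.toDialgebra (span F {v}) W i) (span F {v}) ≤ _
    refine le_trans (pmul_span_singleton_le Q _ v) ?_
    refine le_trans (Submodule.map_mono ih) ?_
    rw [map_pow_succ]

theorem mu_finset (s : Finset P) (hs : ∀ v ∈ s, ∃ t : ℕ, (Lop Q v) ^ t = 0) :
    ∃ q, Mu Q.toDialgebra (span F (s : Set P)) ⊤ q = ⊥ := by
  classical
  induction s using Finset.induction_on with
  | empty =>
    refine ⟨1, ?_⟩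
    show Q.toDialgebra.pmul ⊤ (span F (∅ : Finset P)) = ⊥
    rw [Finset.coe_empty, Submodule.span_empty, pmul_bot_right]
  | @insert v s hvs ih =>
    obtain ⟨q', hq'⟩ := ih (fun w hw => hs w (Finset.mem_insert_of_mem hw))
    obtain ⟨t, ht⟩ := hs v (Finset.mem_insert_self v s)
    refine ⟨t + q', le_bot_iff.1 ?_⟩
    have hspan : span F ((insert v s : Finset P) : Set P) = span F {v} ⊔ span F (s : Set P) := by
      rw [Finset.coe_insert, Submodule.span_insert]
    rw [hspan]
    refine le_trans (Mu_sup_le Q _ _ _ (t + q')) ?_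
    refine iSup_le ?_
    intro i
    refine iSup_le ?_
    intro hi
    rcases Nat.lt_or_ge i t with hit | hit
    · -- i < t : then t + q' - i ≥ q' so the Z-part is already ⊥
      have h1 : Mu Q.toDialgebra (span F (s : Set P)) ⊤ (t + q' - i) = ⊥ := by
        rw [show t + q' - i = q' + (t - i) by omega, Mu_add, hq', Mu_bot]
      rw [h1, Mu_bot]
    · -- i ≥ t : Lop v power vanishes
      refine le_trans (Mu_singleton_le Q _ v i) ?_
      have : (Lop Q v)^i = 0 := by
        rw [show i = t + (i - t) by omega, pow_add, ht, zero_mul]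
      rw [this, Submodule.map_zero]

/-- Associative nilpotency of `B`. -/
theorem apow_eq_bot [FiniteDimensional F P] (B : Submodule F P)
    (hnil : ∀ b ∈ B, ∃ t : ℕ, (Lop Q b) ^ t = 0) :
    ∃ q, Q.toDialgebra.apow B q = ⊥ := by
  obtain ⟨s, hsspan⟩ := (IsNoetherian.noetherian B : B.FG)
  obtain ⟨q, hq⟩ := mu_finset Q s (fun v hv => hnil v (by rw [← hsspan]; exact subset_span hv))
  refine ⟨q, le_bot_iff.1 ?_⟩
  have h1 : ∀ k, Q.toDialgebra.apow B k ≤ Mu Q.toDialgebra B ⊤ k := by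
    intro k
    induction k with
    | zero => exact le_top
    | succ k ih => exact pmul_mono _ ih le_rfl
  refine le_trans (h1 q) ?_
  rw [hsspan] at hq
  exact le_of_eq hq

end Assoc

end PoissonAux
namespace PoissonAux

open Submodule Module

variable {F P : Type*} [Field F] [AddCommGroup P] [Module F P]

section Interchange

variable (Q : PoissonAlgebra F P)

/-- `Xab a b`: span of products of `a+1` factors which are iterated Lie powers of `B`
of total extra Lie weight `b`. -/
def Xab (D : Dialgebra F P) (B : Submodule F P) : ℕ → ℕ → Submodule F P
  | 0 => fun b => D.lpow B b
  | a + 1 => fun b => ⨆ (i : ℕ) (_ : i ≤ b), D.pmul (Xab D B a i) (D.lpow B (b - i))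

theorem lpow_le_self {B : Submodule F P} (hB : Q.toDialgebra.IsSubalgebra B) :
    ∀ k, Q.toDialgebra.lpow B k ≤ B := by
  intro k
  induction k with
  | zero => exact le_rfl
  | succ k ih =>
    show Q.toDialgebra.pbra (Q.toDialgebra.lpow B k) B ≤ B
    refine le_trans ?_ hB
    exact le_trans (pbra_mono _ ih le_rfl) (le_sup_right (α := Submodule F P))

theorem lpow_bot_of {B : Submodule F P} {n : ℕ} (h : Q.toDialgebra.lpow B n = ⊥) :
    ∀ k, n ≤ k → Q.toDialgebra.lpow B k = ⊥ := by
  have haux : ∀ m, Q.toDialgebra.lpow B (n + m) = ⊥ := by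
    intro m
    induction m with
    | zero => exact h
    | succ m ih =>
      show Q.toDialgebra.pbra (Q.toDialgebra.lpow B (n + m)) B = ⊥
      rw [ih, pbra_bot_left]
  intro k hk
  rw [show k = n + (k - n) by omega]
  exact haux _

theorem apow_bot_of {B : Submodule F P} {q : ℕ} (h : Q.toDialgebra.apow B q = ⊥) :
    ∀ k, q ≤ k → Q.toDialgebra.apow B k = ⊥ := by
  have haux : ∀ m, Q.toDialgebra.apow B (q + m) = ⊥ := by
    intro m
    induction m with
    | zero => exact h
    | succ m ih =>
      show Q.toDialgebra.pmul (Q.toDialgebra.apow B (q + m)) B = ⊥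
      rw [ih, pmul_bot_left]
  intro k hk
  rw [show k = q + (k - q) by omega]
  exact haux _

theorem bra_Xab (B : Submodule F P) :
    ∀ a b, Q.toDialgebra.pbra (Xab Q.toDialgebra B a b) B ≤ Xab Q.toDialgebra B a (b+1) := by
  intro a
  induction a with
  | zero =>
    intro b
    exact le_rfl
  | succ a ih =>
    intro b
    show Q.toDialgebra.pbra (⨆ (i : ℕ) (_ : i ≤ b), _) B ≤ _
    refine le_trans (pbra_iSup_left_le _ _ _) (iSup_le fun i => ?_)
    refine le_trans (pbra_iSup_left_le _ _ _) (iSup_le fun hi => ?_)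
    refine le_trans (pbra_pmul_le Q _ _ _) (sup_le ?_ ?_)
    · refine le_trans (pmul_mono _ (ih i) le_rfl) ?_
      refine le_iSup_of_le (i+1) (le_iSup_of_le (by omega) ?_)
      rw [show b + 1 - (i+1) = b - i by omega]
    · have hstep : Q.toDialgebra.pbra (Q.toDialgebra.lpow B (b - i)) B =
          Q.toDialgebra.lpow B ((b - i) + 1) := rfl
      rw [hstep]
      refine le_iSup_of_le i (le_iSup_of_le (by omega) ?_)
      rw [show b + 1 - i = (b - i) + 1 by omega]
  
theorem mul_Xab (B : Submodule F P) (a b : ℕ) :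
    Q.toDialgebra.pmul (Xab Q.toDialgebra B a b) B ≤ Xab Q.toDialgebra B (a+1) b := by
  refine le_iSup_of_le b (le_iSup_of_le le_rfl ?_)
  rw [Nat.sub_self]
  exact le_rfl

theorem lcs_le_Xab (B : Submodule F P) :
    ∀ m, Q.toDialgebra.lcs B m ≤
      ⨆ (a : ℕ) (_ : a ≤ m), Xab Q.toDialgebra B a (m - a) := by
  intro m
  induction m with
  | zero => exact le_iSup_of_le 0 (le_iSup_of_le le_rfl le_rfl)
  | succ m ih =>
    show Q.toDialgebra.psq (Q.toDialgebra.lcs B m) B ≤ _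
    refine sup_le ?_ ?_
    · refine le_trans (pmul_mono _ ih le_rfl) ?_
      refine le_trans (pmul_iSup_left_le _ _ _) (iSup_le fun a => ?_)
      refine le_trans (pmul_iSup_left_le _ _ _) (iSup_le fun ha => ?_)
      refine le_trans (mul_Xab Q B a (m - a)) ?_
      refine le_iSup_of_le (a+1) (le_iSup_of_le (by omega) ?_)
      rw [show m + 1 - (a+1) = m - a by omega]
    · refine le_trans (pbra_mono _ ih le_rfl) ?_
      refine le_trans (pbra_iSup_left_le _ _ _) (iSup_le fun a => ?_)
      refine le_trans (pbra_iSup_left_le _ _ _) (iSup_le fun ha => ?_)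
      refine le_trans (bra_Xab Q B a (m - a)) ?_
      refine le_iSup_of_le a (le_iSup_of_le (by omega) ?_)
      rw [show m + 1 - a = (m - a) + 1 by omega]

theorem Xab_le_apow {B : Submodule F P} (hB : Q.toDialgebra.IsSubalgebra B) :
    ∀ a b, Xab Q.toDialgebra B a b ≤ Q.toDialgebra.apow B a := by
  intro a
  induction a with
  | zero => exact fun b => lpow_le_self Q hB b
  | succ a ih =>
    intro b
    refine iSup_le fun i => iSup_le fun hi => ?_
    show Q.toDialgebra.pmul (Xab Q.toDialgebra B a i) (Q.toDialgebra.lpow B (b - i)) ≤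
      Q.toDialgebra.pmul (Q.toDialgebra.apow B a) B
    exact pmul_mono _ (ih i) (lpow_le_self Q hB _)

theorem Xab_bot {B : Submodule F P} {n₁ : ℕ} (hn₁ : Q.toDialgebra.lpow B n₁ = ⊥) :
    ∀ a b, (a+1) * n₁ ≤ b → Xab Q.toDialgebra B a b = ⊥ := by
  intro a
  induction a with
  | zero =>
    intro b hb
    exact lpow_bot_of Q hn₁ b (by omega)
  | succ a ih =>
    intro b hb
    refine le_bot_iff.1 (iSup_le fun i => iSup_le fun hi => ?_)
    rcases Nat.lt_or_ge (b - i) n₁ with hbi | hbi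
    · -- then i is large, kill the Xab factor
      have : Xab Q.toDialgebra B a i = ⊥ := ih i (by
        have hmul : (a+1+1) * n₁ = (a+1)*n₁ + n₁ := by ring
        omega)
      rw [this, pmul_bot_left]
    · rw [lpow_bot_of Q hn₁ (b - i) hbi, pmul_bot_right]

theorem lcs_eq_bot_of {B : Submodule F P} (hB : Q.toDialgebra.IsSubalgebra B)
    {q n₁ : ℕ} (hq : Q.toDialgebra.apow B q = ⊥) (hn₁ : Q.toDialgebra.lpow B n₁ = ⊥) :
    Q.toDialgebra.lcs B (q + (q+1) * n₁ + 1) = ⊥ := by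
  set m := q + (q+1) * n₁ + 1 with hm
  refine le_bot_iff.1 ?_
  refine le_trans (lcs_le_Xab Q B m) ?_
  refine iSup_le fun a => iSup_le fun ha => ?_
  rcases Nat.lt_or_ge a q with haq | haq
  · -- a < q : Lie weight is large
    have hcount : (a + 1) * n₁ ≤ m - a := by
      have h1 : (a+1) * n₁ ≤ (q+1) * n₁ := Nat.mul_le_mul_right n₁ (by omega)
      omega
    rw [Xab_bot Q hn₁ a (m - a) hcount]
  · refine le_trans (Xab_le_apow Q hB a (m - a)) ?_
    rw [apow_bot_of Q hq a haq]

end Interchange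

end PoissonAux
/-- If `B` is a subideal of a Poisson algebra, `C` an ideal of `B` with `C ⊆ φ(P)`,
and `B/C` is nilpotent, then `B` is nilpotent. -/
theorem nilpotent_of_quotient_nilpotent {F P : Type*} [Field F] [AddCommGroup P] [Module F P]
    [FiniteDimensional F P] (Q : PoissonAlgebra F P) (B C : Submodule F P)
    (hsub : ∃ (r : ℕ) (c : ℕ → Submodule F P), c 0 = B ∧ c r = ⊤ ∧
      (∀ i ≤ r, Q.toDialgebra.IsSubalgebra (c i)) ∧
      (∀ i < r, Q.toDialgebra.IsIdealIn (c i) (c (i + 1))))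
    (hC : Q.toDialgebra.IsIdealIn C B) (hCphi : C ≤ Q.toDialgebra.phi)
    (hquot : ∃ n, Q.toDialgebra.lcs B n ≤ C) :
    Q.toDialgebra.IsNilpotentSub B := by
  classical
  obtain ⟨r, c, hc0, hcr, hcsub, hcid⟩ := hsub
  obtain ⟨n, hn⟩ := hquot
  have hB : Q.toDialgebra.IsSubalgebra B := hc0 ▸ hcsub 0 (Nat.zero_le r)
  have hchain : ∀ i, i ≤ r → B ≤ c i := by
    intro i
    induction i with
    | zero => intro _; exact le_of_eq hc0.symm
    | succ i ih => intro hi; exact (ih (by omega)).trans (hcid i (by omega)).1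
  have hlcsC : Q.toDialgebra.lcs B n ≤ Q.toDialgebra.phi := hn.trans hCphi
  have hrange : ∀ T : Module.End F P,
      (∀ i, i < r → ∀ x ∈ c (i+1), T x ∈ c i) →
      (∀ k, ∀ x ∈ Q.toDialgebra.lcs B k, T x ∈ Q.toDialgebra.lcs B (k+1)) →
      Submodule.map (T ^ (r + n)) ⊤ ≤ Q.toDialgebra.phi := by
    intro T hTc hTl
    have h1 : ∀ j, j ≤ r → Submodule.map (T^j) ⊤ ≤ c (r - j) := by
      intro j
      induction j with
      | zero =>
        intro _
        rw [Nat.sub_zero, hcr]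
        exact le_top
      | succ j ih =>
        intro hj
        rw [PoissonAux.map_pow_succ]
        refine le_trans (Submodule.map_mono (ih (by omega))) ?_
        refine PoissonAux.map_le_of T ?_
        intro x hx
        have hrj : r - j = (r - (j+1)) + 1 := by omega
        rw [hrj] at hx
        exact hTc (r - (j+1)) (by omega) x hx
    have h2 : ∀ k, Submodule.map (T^(r+k)) ⊤ ≤ Q.toDialgebra.lcs B k := by
      intro k
      induction k with
      | zero =>
        have h0 := h1 r le_rfl
        rw [Nat.sub_self, hc0] at h0
        exact h0
      | succ k ih =>
        rw [show r + (k+1) = (r + k) + 1 by omega, PoissonAux.map_pow_succ]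
        refine le_trans (Submodule.map_mono ih) (PoissonAux.map_le_of T ?_)
        exact hTl k
    exact le_trans (h2 n) hlcsC
  have hopnil : ∀ b ∈ B,
      (∃ s, (PoissonAux.Lop Q b)^s = 0) ∧ (∃ s, (PoissonAux.Aop Q b)^s = 0) := by
    intro b hb
    constructor
    · refine PoissonAux.endo_nilp Q (PoissonAux.Lop Q b) (r + n) ?_ ?_ ?_
      · refine hrange _ ?_ ?_
        · intro i hi x hx
          exact (hcid i hi).2.1 (PoissonAux.mem_pmul _ (hchain i (by omega) hb) hx)
        · intro k x hx
          show Q.toDialgebra.mul b x ∈ Q.toDialgebra.psq (Q.toDialgebra.lcs B k) B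
          rw [Q.mul_comm b x]
          exact le_sup_left (α := Submodule F P) (PoissonAux.mem_pmul _ hx hb)
      · intro x hx
        exact PoissonAux.phi_mul_invariant Q b hx
      · intro s hstab
        refine sup_le (PoissonAux.pmul_le _ ?_) (PoissonAux.pbra_le _ ?_)
        · intro u hu w hw
          rw [LinearMap.mem_ker] at hu
          rw [LinearMap.mem_ker, PoissonAux.Lpow_mul Q b s u w, hu]
          simp
        · intro u hu w hw
          rw [LinearMap.mem_ker] at hw
          have hw1 : ((PoissonAux.Lop Q b)^(s+1)) w = 0 :=
            LinearMap.mem_ker.1 (PoissonAux.ker_pow_succ_le _ s (LinearMap.mem_ker.2 hw))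
          rw [← hstab 1, LinearMap.mem_ker, PoissonAux.Lpow_bracket Q b s u w, hw, hw1]
          simp
    · refine PoissonAux.endo_nilp Q (PoissonAux.Aop Q b) (r + n) ?_ ?_ ?_
      · refine hrange _ ?_ ?_
        · intro i hi x hx
          exact (hcid i hi).2.2.2.1 (PoissonAux.mem_pbra _ (hchain i (by omega) hb) hx)
        · intro k x hx
          show Q.toDialgebra.bracket b x ∈ Q.toDialgebra.psq (Q.toDialgebra.lcs B k) B
          rw [PoissonAux.bra_anti Q b x]
          exact neg_mem (le_sup_right (α := Submodule F P) (PoissonAux.mem_pbra _ hx hb))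
      · intro x hx
        exact PoissonAux.phi_bra_invariant Q b hx
      · intro s hstab
        refine sup_le (PoissonAux.pmul_le _ ?_) (PoissonAux.pbra_le _ ?_)
        · intro u hu w hw
          rw [LinearMap.mem_ker] at hu hw
          rw [← hstab s, LinearMap.mem_ker]
          exact PoissonAux.der_pow_ker (PoissonAux.Aop Q b) Q.toDialgebra.mul
            (PoissonAux.Aop_mul_der Q b) (s+s) s s u w rfl hu hw
        · intro u hu w hw
          rw [LinearMap.mem_ker] at hu hw
          rw [← hstab s, LinearMap.mem_ker]
          exact PoissonAux.der_pow_ker (PoissonAux.Aop Q b) Q.toDialgebra.bracket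
            (PoissonAux.Aop_bra_der Q b) (s+s) s s u w rfl hu hw
  obtain ⟨n₁, hn₁⟩ := PoissonAux.lpow_eq_bot Q B hB (fun b hb => (hopnil b hb).2)
  obtain ⟨q, hq⟩ := PoissonAux.apow_eq_bot Q B (fun b hb => (hopnil b hb).1)
  exact ⟨q + (q+1) * n₁ + 1, PoissonAux.lcs_eq_bot_of Q hB hq hn₁⟩
end
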